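/- arXiv:0712.1072 — 2 statements merged into one kernel-verified Lean document; each statement's English description precedes it below -/
import Mathlib

section
/- Let Λ, Γ be k-graphs and X a (Λ,Γ) k-morph. Then a linking graph for X exists and is unique up to isomorphism: if (Σ, i) and (Σ', i') are both linking graphs for X, then there is a (k+1)-graph isomorphism Σ ≅ Σ' compatible with the inclusions i, i'. -/
/-- A `k`-graph structure on a set `Obj` of vertices and a set `Path` of morphisms:
a countable small category together with a degree functor `d : Path → ℕ^k`
satisfying the unique factorisation property. Vertices are identified with
identity morphisms via `ident`.  Composition is a total function, constrained
only on composable pairs (`src p = rng q`). -/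
structure KGraphStr (k : ℕ) (Obj : Type) (Path : Type) where
  src : Path → Obj
  rng : Path → Obj
  ident : Obj → Path
  comp : Path → Path → Path
  d : Path → Fin k → ℕ
  countable : Countable Path
  nonemptyObj : Nonempty Obj
  src_ident : ∀ v, src (ident v) = v
  rng_ident : ∀ v, rng (ident v) = v
  d_ident : ∀ v, d (ident v) = 0
  src_comp : ∀ p q, src p = rng q → src (comp p q) = src q
  rng_comp : ∀ p q, src p = rng q → rng (comp p q) = rng p
  d_comp : ∀ p q, src p = rng q → d (comp p q) = d p + d q
  comp_ident : ∀ p, comp p (ident (src p)) = p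
  ident_comp : ∀ p, comp (ident (rng p)) p = p
  comp_assoc : ∀ p q r, src p = rng q → src q = rng r →
    comp (comp p q) r = comp p (comp q r)
  factor : ∀ p (m n : Fin k → ℕ), d p = m + n →
    ∃! μν : Path × Path, src μν.1 = rng μν.2 ∧ d μν.1 = m ∧ d μν.2 = n ∧
      comp μν.1 μν.2 = p

/-- A `(Λ,Γ)` `k`-morph: a countable set `X` with `r : X → Λ⁰`, `s : X → Γ⁰`
and a structure bijection `φ : X *_{Γ⁰} Γ → Λ *_{Λ⁰} X`, here encoded by its
two components `φl`, `φx` (constrained only on composable pairs) together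
with the bijectivity condition `bij`. -/
structure KMorph {k : ℕ} {OΛ PΛ OΓ PΓ : Type}
    (Λ : KGraphStr k OΛ PΛ) (Γ : KGraphStr k OΓ PΓ) (X : Type) where
  countable : Countable X
  r : X → OΛ
  s : X → OΓ
  φl : X → PΓ → PΛ
  φx : X → PΓ → X
  src_φl : ∀ x γ, s x = Γ.rng γ → Λ.src (φl x γ) = r (φx x γ)
  d_φl : ∀ x γ, s x = Γ.rng γ → Λ.d (φl x γ) = Γ.d γ
  s_φx : ∀ x γ, s x = Γ.rng γ → s (φx x γ) = Γ.src γ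
  rng_φl : ∀ x γ, s x = Γ.rng γ → Λ.rng (φl x γ) = r x
  mult_φl : ∀ x γ₁ γ₂, s x = Γ.rng γ₁ → Γ.src γ₁ = Γ.rng γ₂ →
      φl x (Γ.comp γ₁ γ₂) = Λ.comp (φl x γ₁) (φl (φx x γ₁) γ₂)
  mult_φx : ∀ x γ₁ γ₂, s x = Γ.rng γ₁ → Γ.src γ₁ = Γ.rng γ₂ →
      φx x (Γ.comp γ₁ γ₂) = φx (φx x γ₁) γ₂
  bij : ∀ lam x', Λ.src lam = r x' →
      ∃! p : X × PΓ, s p.1 = Γ.rng p.2 ∧ φl p.1 p.2 = lam ∧ φx p.1 p.2 = x'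

/-- An isomorphism of `(Λ,Γ)` `k`-morphs: a bijection intertwining the
structure maps. -/
structure MorphIso {k : ℕ} {OΛ PΛ OΓ PΓ X Y : Type}
    {Λ : KGraphStr k OΛ PΛ} {Γ : KGraphStr k OΓ PΓ}
    (M : KMorph Λ Γ X) (N : KMorph Λ Γ Y) where
  θ : X ≃ Y
  r_θ : ∀ x, N.r (θ x) = M.r x
  s_θ : ∀ x, N.s (θ x) = M.s x
  φl_θ : ∀ x γ, M.s x = Γ.rng γ → N.φl (θ x) γ = M.φl x γ
  φx_θ : ∀ x γ, M.s x = Γ.rng γ → N.φx (θ x) γ = θ (M.φx x γ)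

/-- The underlying set `X₁ *_{Λ₁⁰} X₂` of the fibred product of two k-morphs. -/
def FibCarrier {k : ℕ} {O₀ P₀ O₁ P₁ O₂ P₂ X₁ X₂ : Type}
    {Λ₀ : KGraphStr k O₀ P₀} {Λ₁ : KGraphStr k O₁ P₁} {Λ₂ : KGraphStr k O₂ P₂}
    (M₁ : KMorph Λ₀ Λ₁ X₁) (M₂ : KMorph Λ₁ Λ₂ X₂) : Type :=
  {p : X₁ × X₂ // M₁.s p.1 = M₂.r p.2}

/-- `P` is *the* fibred product k-morph of `M₁` and `M₂`:
`r(x₁,x₂) = r(x₁)`, `s(x₁,x₂) = s(x₂)`, and `φ` is obtained by passing a path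
through `M₂` and then through `M₁`. -/
def IsFibProd {k : ℕ} {O₀ P₀ O₁ P₁ O₂ P₂ X₁ X₂ : Type}
    {Λ₀ : KGraphStr k O₀ P₀} {Λ₁ : KGraphStr k O₁ P₁} {Λ₂ : KGraphStr k O₂ P₂}
    (M₁ : KMorph Λ₀ Λ₁ X₁) (M₂ : KMorph Λ₁ Λ₂ X₂)
    (P : KMorph Λ₀ Λ₂ (FibCarrier M₁ M₂)) : Prop :=
  (∀ p : FibCarrier M₁ M₂, P.r p = M₁.r p.1.1) ∧
  (∀ p : FibCarrier M₁ M₂, P.s p = M₂.s p.1.2) ∧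
  (∀ (p : FibCarrier M₁ M₂) lam, P.s p = Λ₂.rng lam →
    P.φl p lam = M₁.φl p.1.1 (M₂.φl p.1.2 lam) ∧
    (P.φx p lam).1.1 = M₁.φx p.1.1 (M₂.φl p.1.2 lam) ∧
    (P.φx p lam).1.2 = M₂.φx p.1.2 lam)

/-- `I` is the identity endomorph `I_Λ` on `Λ`: underlying set `Λ⁰`,
`r = s = id`, and `φ(r(λ),λ) = (λ, s(λ))`. -/
def IsIdMorph {k : ℕ} {O P : Type} {Λ : KGraphStr k O P}
    (I : KMorph Λ Λ O) : Prop :=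
  (∀ v, I.r v = v) ∧ (∀ v, I.s v = v) ∧
  (∀ v lam, I.s v = Λ.rng lam → I.φl v lam = lam ∧ I.φx v lam = Λ.src lam)

/-- A morphism (degree-preserving functor) of k-graphs from `Γ` to `Λ`. -/
structure KGraphHom {k : ℕ} {OΓ PΓ OΛ PΛ : Type}
    (Γ : KGraphStr k OΓ PΓ) (Λ : KGraphStr k OΛ PΛ) where
  vmap : OΓ → OΛ
  pmap : PΓ → PΛ
  src_pmap : ∀ p, Λ.src (pmap p) = vmap (Γ.src p)
  rng_pmap : ∀ p, Λ.rng (pmap p) = vmap (Γ.rng p)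
  d_pmap : ∀ p, Λ.d (pmap p) = Γ.d p
  ident_pmap : ∀ v, pmap (Γ.ident v) = Λ.ident (vmap v)
  comp_pmap : ∀ p q, Γ.src p = Γ.rng q →
      pmap (Γ.comp p q) = Λ.comp (pmap p) (pmap q)

/-- `F : Γ → Λ` is a covering: a surjective k-graph morphism restricting to
bijections `vΓ → F(v)Λ` and `Γv → ΛF(v)` for every vertex `v`. -/
def IsCovering {k : ℕ} {OΓ PΓ OΛ PΛ : Type}
    {Γ : KGraphStr k OΓ PΓ} {Λ : KGraphStr k OΛ PΛ}
    (F : KGraphHom Γ Λ) : Prop :=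
  Function.Surjective F.pmap ∧
  (∀ v : OΓ, Set.BijOn F.pmap {p | Γ.rng p = v} {q | Λ.rng q = F.vmap v}) ∧
  (∀ v : OΓ, Set.BijOn F.pmap {p | Γ.src p = v} {q | Λ.src q = F.vmap v})

/-- `M` is the k-morph `X(F)` (also written `ₚX` for a covering `F = p`)
associated with a k-graph morphism `F : Γ → Λ`: underlying set `Γ⁰`,
`r = F` on vertices, `s = id`, and `φ(r(γ), γ) = (F(γ), s(γ))`. -/
def IsXalpha {k : ℕ} {OΓ PΓ OΛ PΛ : Type}
    {Γ : KGraphStr k OΓ PΓ} {Λ : KGraphStr k OΛ PΛ}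
    (F : KGraphHom Γ Λ) (M : KMorph Λ Γ OΓ) : Prop :=
  (∀ v, M.r v = F.vmap v) ∧ (∀ v, M.s v = v) ∧
  (∀ v γ, M.s v = Γ.rng γ → M.φl v γ = F.pmap γ ∧ M.φx v γ = Γ.src γ)

/-- An isomorphism of (higher-rank) graph structures. -/
structure GraphIso {k : ℕ} {O P O' P' : Type}
    (S : KGraphStr k O P) (S' : KGraphStr k O' P') where
  ev : O ≃ O'
  ep : P ≃ P'
  src_ep : ∀ p, S'.src (ep p) = ev (S.src p)
  rng_ep : ∀ p, S'.rng (ep p) = ev (S.rng p)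
  d_ep : ∀ p, S'.d (ep p) = S.d p
  ident_ep : ∀ v, ep (S.ident v) = S'.ident (ev v)
  comp_ep : ∀ p q, S.src p = S.rng q → ep (S.comp p q) = S'.comp (ep p) (ep q)

/-- A linking graph for a `(Λ,Γ)` k-morph `M`: a `(k+1)`-graph `S` together
with an `ι`-quasimorphism `i : Λ ⊔ Γ → S` (encoded by the four maps `ivΛ`,
`ivΓ`, `ipΛ`, `ipΓ`) inducing an isomorphism of `Λ ⊔ Γ` onto
`S^ι = {σ : d(σ) ∈ ι(ℕ^k)}`, such that each edge of degree `e_{k+1}` has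
source in `i(Γ⁰)` and range in `i(Λ⁰)`, and such that the k-morph
`X(Λ,Γ,S,i)` of degree-`e_{k+1}` edges (with structure maps coming from the
factorisation property of `S`) is isomorphic to `M` via a bijection `ψ`. -/
structure Linking {k : ℕ} {OΛ PΛ OΓ PΓ X : Type}
    (Λ : KGraphStr k OΛ PΛ) (Γ : KGraphStr k OΓ PΓ)
    (M : KMorph Λ Γ X) where
  Ob : Type
  Pa : Type
  S : KGraphStr (k+1) Ob Pa
  ivΛ : OΛ → Ob
  ivΓ : OΓ → Ob
  ipΛ : PΛ → Pa
  ipΓ : PΓ → Pa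
  -- `i` is an `ι`-quasimorphism
  dΛ : ∀ p, S.d (ipΛ p) = Fin.snoc (Λ.d p) 0
  dΓ : ∀ p, S.d (ipΓ p) = Fin.snoc (Γ.d p) 0
  srcΛ : ∀ p, S.src (ipΛ p) = ivΛ (Λ.src p)
  rngΛ : ∀ p, S.rng (ipΛ p) = ivΛ (Λ.rng p)
  srcΓ : ∀ p, S.src (ipΓ p) = ivΓ (Γ.src p)
  rngΓ : ∀ p, S.rng (ipΓ p) = ivΓ (Γ.rng p)
  identΛ : ∀ v, S.ident (ivΛ v) = ipΛ (Λ.ident v)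
  identΓ : ∀ w, S.ident (ivΓ w) = ipΓ (Γ.ident w)
  compΛ : ∀ p q, Λ.src p = Λ.rng q → S.comp (ipΛ p) (ipΛ q) = ipΛ (Λ.comp p q)
  compΓ : ∀ p q, Γ.src p = Γ.rng q → S.comp (ipΓ p) (ipΓ q) = ipΓ (Γ.comp p q)
  -- `i` induces an isomorphism of `Λ ⊔ Γ` onto `S^ι`
  inj : Function.Injective (Sum.elim ipΛ ipΓ : PΛ ⊕ PΓ → Pa)
  surjι : ∀ σ : Pa, S.d σ (Fin.last k) = 0 →
    (∃ p, σ = ipΛ p) ∨ (∃ q, σ = ipΓ q)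
  -- edges of degree e_{k+1} run from `i(Γ⁰)` to `i(Λ⁰)`
  edge_src : ∀ σ : Pa, S.d σ = Fin.snoc (0 : Fin k → ℕ) 1 → ∃ w, S.src σ = ivΓ w
  edge_rng : ∀ σ : Pa, S.d σ = Fin.snoc (0 : Fin k → ℕ) 1 → ∃ v, S.rng σ = ivΛ v
  -- the induced k-morph `X(Λ,Γ,S,i)` is isomorphic to `M` via `ψ`
  ψ : X ≃ {σ : Pa // S.d σ = Fin.snoc (0 : Fin k → ℕ) 1}
  ψ_rng : ∀ x, S.rng (ψ x).1 = ivΛ (M.r x)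
  ψ_src : ∀ x, S.src (ψ x).1 = ivΓ (M.s x)
  ψ_φ : ∀ x γ, M.s x = Γ.rng γ →
    S.comp (ψ x).1 (ipΓ γ) = S.comp (ipΛ (M.φl x γ)) (ψ (M.φx x γ)).1

namespace LinkAux

open Fin

lemma snoc_zero_zero {k : ℕ} : (Fin.snoc (0 : Fin k → ℕ) 0 : Fin (k+1) → ℕ) = 0 := by
  funext i
  refine Fin.lastCases ?_ ?_ i <;> simp [Fin.snoc_last, Fin.snoc_castSucc]

lemma snoc_add {k : ℕ} (a b : Fin k → ℕ) (x y : ℕ) :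
    (Fin.snoc a x : Fin (k+1) → ℕ) + Fin.snoc b y = Fin.snoc (a + b) (x + y) := by
  funext i
  refine Fin.lastCases ?_ ?_ i <;> simp [Fin.snoc_last, Fin.snoc_castSucc]

lemma init_add {k : ℕ} (a b : Fin (k+1) → ℕ) :
    Fin.init (a + b) = Fin.init a + Fin.init b := by
  funext i; simp [Fin.init]

lemma snoc_inj {k : ℕ} {a b : Fin k → ℕ} {x y : ℕ}
    (h : (Fin.snoc a x : Fin (k+1) → ℕ) = Fin.snoc b y) : a = b ∧ x = y := by
  constructor
  · have := congrArg Fin.init h; simpa [Fin.init_snoc] using this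
  · have := congrArg (fun f => f (Fin.last k)) h; simpa using this

lemma eq_snoc_init {k : ℕ} (a : Fin (k+1) → ℕ) :
    a = Fin.snoc (Fin.init a) (a (Fin.last k)) := by
  simp [Fin.snoc_init_self]

/-- In a k-graph, a path of degree 0 is an identity. -/
lemma deg_zero_ident {k : ℕ} {O P : Type} (S : KGraphStr k O P) {p : P}
    (h : S.d p = 0) : p = S.ident (S.src p) ∧ p = S.ident (S.rng p) := by
  obtain ⟨mn, hmn, hu⟩ := S.factor p 0 0 (by simpa using h)
  have h1 : ((p, S.ident (S.src p)) : P × P) = mn := by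
    apply hu
    refine ⟨by rw [S.rng_ident], h, S.d_ident _, S.comp_ident p⟩
  have h2 : ((S.ident (S.rng p), p) : P × P) = mn := by
    apply hu
    refine ⟨by rw [S.src_ident], S.d_ident _, h, S.ident_comp p⟩
  have h3 := h1.trans h2.symm
  constructor
  · have := congrArg Prod.snd h3; simpa using this.symm
  · have := congrArg Prod.fst h3; simpa using this

lemma deg_zero_src_eq_rng {k : ℕ} {O P : Type} (S : KGraphStr k O P) {p : P}
    (h : S.d p = 0) : S.src p = S.rng p := by
  obtain ⟨h1, h2⟩ := deg_zero_ident S h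
  have := h1.symm.trans h2
  have := congrArg S.src this
  simpa [S.src_ident] using this

section MorphLemmas

variable {k : ℕ} {OΛ PΛ OΓ PΓ X : Type}
  {Λ : KGraphStr k OΛ PΛ} {Γ : KGraphStr k OΓ PΓ} (M : KMorph Λ Γ X)

lemma phl_ident (x : X) : M.φl x (Γ.ident (M.s x)) = Λ.ident (M.r x) := by
  have hc : M.s x = Γ.rng (Γ.ident (M.s x)) := by rw [Γ.rng_ident]
  have hd : Λ.d (M.φl x (Γ.ident (M.s x))) = 0 := by
    rw [M.d_φl x _ hc, Γ.d_ident]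
  have hr : Λ.rng (M.φl x (Γ.ident (M.s x))) = M.r x := M.rng_φl x _ hc
  have := (deg_zero_ident Λ hd).2
  rw [this, hr]

lemma phx_ident (x : X) : M.φx x (Γ.ident (M.s x)) = x := by
  have hc : M.s x = Γ.rng (Γ.ident (M.s x)) := by rw [Γ.rng_ident]
  set ι := Γ.ident (M.s x) with hι
  set y := M.φx x ι with hy
  have hry : M.r y = M.r x := by
    have := M.src_φl x ι hc
    rw [phl_ident] at this
    rw [← this, Λ.src_ident]
  have hsy : M.s y = M.s x := by rw [hy, M.s_φx x ι hc, hι, Γ.src_ident]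
  -- bij at (Λ.ident (M.r x), y)
  obtain ⟨p₀, hp₀, hu⟩ := M.bij (Λ.ident (M.r x)) y
    (by rw [Λ.src_ident, hry])
  have hx : ((x, ι) : X × PΓ) = p₀ := by
    apply hu
    exact ⟨hc, phl_ident M x, rfl⟩
  have hyp : ((y, Γ.ident (M.s y)) : X × PΓ) = p₀ := by
    apply hu
    refine ⟨by rw [Γ.rng_ident], by rw [phl_ident M y, hry], ?_⟩
    -- φx y (ident (s y)) = y : need it... circular? use mult_φx
    have hcc : Γ.src ι = Γ.rng (Γ.ident (M.s y)) := by
      rw [hι, Γ.src_ident, Γ.rng_ident, hsy]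
    have := M.mult_φx x ι (Γ.ident (M.s y)) hc hcc
    rw [hsy] at this ⊢
    rw [← hy] at this
    have hcomp : Γ.comp ι (Γ.ident (M.s x)) = ι := by
      have : Γ.src ι = M.s x := by rw [hι, Γ.src_ident]
      conv_lhs => rw [← this]
      exact Γ.comp_ident ι
    rw [hcomp] at this
    exact this.symm
  have := hx.trans hyp.symm
  exact (congrArg Prod.fst this).symm

end MorphLemmas

end LinkAux
namespace LinkAux

open Classical
noncomputable section

section Existence

variable {k : ℕ} {OΛ PΛ OΓ PΓ X : Type}
  (Λ : KGraphStr k OΛ PΛ) (Γ : KGraphStr k OΓ PΓ) (M : KMorph Λ Γ X)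

/-- Degree-`e_{k+1}` paths of the linking graph: pairs `(λ, x)` with `s λ = r x`. -/
@[reducible] def ECar : Type := {q : PΛ × X // Λ.src q.1 = M.r q.2}

/-- Paths of the linking graph. -/
@[reducible] def PaCar : Type := PΛ ⊕ PΓ ⊕ ECar Λ Γ M

variable {Λ Γ M}

/-- source map -/
def lsrc : PaCar Λ Γ M → OΛ ⊕ OΓ
  | .inl p => .inl (Λ.src p)
  | .inr (.inl q) => .inr (Γ.src q)
  | .inr (.inr e) => .inr (M.s e.1.2)

def lrng : PaCar Λ Γ M → OΛ ⊕ OΓ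
  | .inl p => .inl (Λ.rng p)
  | .inr (.inl q) => .inr (Γ.rng q)
  | .inr (.inr e) => .inl (Λ.rng e.1.1)

def lident : OΛ ⊕ OΓ → PaCar Λ Γ M
  | .inl v => .inl (Λ.ident v)
  | .inr w => .inr (.inl (Γ.ident w))

def ld : PaCar Λ Γ M → Fin (k+1) → ℕ
  | .inl p => Fin.snoc (Λ.d p) 0
  | .inr (.inl q) => Fin.snoc (Γ.d q) 0
  | .inr (.inr e) => Fin.snoc (Λ.d e.1.1) 1

def lcomp : PaCar Λ Γ M → PaCar Λ Γ M → PaCar Λ Γ M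
  | .inl p, .inl q => .inl (Λ.comp p q)
  | .inr (.inl p), .inr (.inl q) => .inr (.inl (Γ.comp p q))
  | .inl p, .inr (.inr e) =>
      if h : Λ.src p = Λ.rng e.1.1 then
        .inr (.inr ⟨(Λ.comp p e.1.1, e.1.2), by
          rw [Λ.src_comp _ _ h]; exact e.2⟩)
      else .inl p
  | .inr (.inr e), .inr (.inl q) =>
      if h : M.s e.1.2 = Γ.rng q then
        .inr (.inr ⟨(Λ.comp e.1.1 (M.φl e.1.2 q), M.φx e.1.2 q), by
          rw [Λ.src_comp]
          · exact M.src_φl e.1.2 q h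
          · rw [M.rng_φl e.1.2 q h]; exact e.2⟩)
      else .inr (.inr e)
  | p, _ => p

end Existence

end
end LinkAux
namespace LinkAux
noncomputable section
open Classical

section Factor

variable {k : ℕ} {OΛ PΛ OΓ PΓ X : Type}
  {Λ : KGraphStr k OΛ PΛ} {Γ : KGraphStr k OΓ PΓ} {M : KMorph Λ Γ X}

lemma ld_split {f : Fin k → ℕ} {c : ℕ} {m n : Fin (k+1) → ℕ}
    (h : (Fin.snoc f c : Fin (k+1) → ℕ) = m + n) :
    f = Fin.init m + Fin.init n ∧ m (Fin.last k) + n (Fin.last k) = c := by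
  constructor
  · have := congrArg Fin.init h
    rwa [Fin.init_snoc, init_add] at this
  · have := congrArg (fun g => g (Fin.last k)) h
    simpa using this.symm

lemma snoc_init_of_last {m : Fin (k+1) → ℕ} {c : ℕ} (h : m (Fin.last k) = c) :
    (Fin.snoc (Fin.init m) c : Fin (k+1) → ℕ) = m := by
  rw [← h]; simp [Fin.snoc_init_self]

lemma link_factor (p : PaCar Λ Γ M) (m n : Fin (k+1) → ℕ)
    (h : ld p = m + n) :
    ∃! μν : PaCar Λ Γ M × PaCar Λ Γ M,
      lsrc μν.1 = lrng μν.2 ∧ ld μν.1 = m ∧ ld μν.2 = n ∧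
        lcomp μν.1 μν.2 = p := by
  match p with
  | .inl lam =>
    obtain ⟨hinit, hlast⟩ := ld_split (h : (Fin.snoc (Λ.d lam) 0 : Fin (k+1) → ℕ) = m + n)
    have hm0 : m (Fin.last k) = 0 := by omega
    have hn0 : n (Fin.last k) = 0 := by omega
    obtain ⟨⟨μ, ν⟩, ⟨hsr, hdμ, hdν, hcomp⟩, huniq⟩ := Λ.factor lam (Fin.init m) (Fin.init n) hinit
    refine ⟨(.inl μ, .inl ν), ⟨by simp [lsrc, lrng, hsr], ?_, ?_, by simp [lcomp, hcomp]⟩, ?_⟩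
    · simp only [ld, hdμ]; exact snoc_init_of_last hm0
    · simp only [ld, hdν]; exact snoc_init_of_last hn0
    · rintro ⟨a, b⟩ ⟨hab, hda, hdb, hc⟩
      rcases a with a | a | ⟨⟨l, x⟩, he⟩
      · rcases b with b | b | ⟨⟨l', x'⟩, he'⟩
        · simp only [lsrc, lrng, Sum.inl.injEq] at hab
          simp only [lcomp, Sum.inl.injEq] at hc
          have hda' : Λ.d a = Fin.init m := by
            have := congrArg Fin.init hda; simpa [ld, Fin.init_snoc] using this
          have hdb' : Λ.d b = Fin.init n := by
            have := congrArg Fin.init hdb; simpa [ld, Fin.init_snoc] using this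
          have := huniq (a, b) ⟨hab, hda', hdb', hc⟩
          simp only [Prod.mk.injEq] at this
          simp [this.1, this.2]
        · simp [lsrc, lrng] at hab
        · have := congrArg (fun g => g (Fin.last k)) hdb
          simp [ld, hn0] at this
      · rcases b with b | b | ⟨⟨l', x'⟩, he'⟩
        · simp [lsrc, lrng] at hab
        · simp [lcomp] at hc
        · have := congrArg (fun g => g (Fin.last k)) hdb
          simp [ld, hn0] at this
      · have := congrArg (fun g => g (Fin.last k)) hda
        simp [ld, hm0] at this
  | .inr (.inl gam) =>
    obtain ⟨hinit, hlast⟩ := ld_split (h : (Fin.snoc (Γ.d gam) 0 : Fin (k+1) → ℕ) = m + n)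
    have hm0 : m (Fin.last k) = 0 := by omega
    have hn0 : n (Fin.last k) = 0 := by omega
    obtain ⟨⟨μ, ν⟩, ⟨hsr, hdμ, hdν, hcomp⟩, huniq⟩ := Γ.factor gam (Fin.init m) (Fin.init n) hinit
    refine ⟨(.inr (.inl μ), .inr (.inl ν)),
      ⟨by simp [lsrc, lrng, hsr], ?_, ?_, by simp [lcomp, hcomp]⟩, ?_⟩
    · simp only [ld, hdμ]; exact snoc_init_of_last hm0
    · simp only [ld, hdν]; exact snoc_init_of_last hn0
    · rintro ⟨a, b⟩ ⟨hab, hda, hdb, hc⟩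
      rcases a with a | a | ⟨⟨l, x⟩, he⟩
      · rcases b with b | b | ⟨⟨l', x'⟩, he'⟩
        · simp [lcomp] at hc
        · simp [lsrc, lrng] at hab
        · have := congrArg (fun g => g (Fin.last k)) hdb
          simp [ld, hn0] at this
      · rcases b with b | b | ⟨⟨l', x'⟩, he'⟩
        · simp [lsrc, lrng] at hab
        · simp only [lsrc, lrng, Sum.inr.injEq] at hab
          simp only [lcomp, Sum.inr.injEq, Sum.inl.injEq] at hc
          have hda' : Γ.d a = Fin.init m := by
            have := congrArg Fin.init hda; simpa [ld, Fin.init_snoc] using this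
          have hdb' : Γ.d b = Fin.init n := by
            have := congrArg Fin.init hdb; simpa [ld, Fin.init_snoc] using this
          have := huniq (a, b) ⟨hab, hda', hdb', hc⟩
          simp only [Prod.mk.injEq] at this
          simp [this.1, this.2]
        · have := congrArg (fun g => g (Fin.last k)) hdb
          simp [ld, hn0] at this
      · have := congrArg (fun g => g (Fin.last k)) hda
        simp [ld, hm0] at this
  | .inr (.inr ⟨⟨lam, x⟩, he⟩) =>
    obtain ⟨hinit, hlast⟩ := ld_split (h : (Fin.snoc (Λ.d lam) 1 : Fin (k+1) → ℕ) = m + n)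
    obtain ⟨⟨l₁, l₂⟩, ⟨hsr, hd1, hd2, hcomp⟩, huniq⟩ :=
      Λ.factor lam (Fin.init m) (Fin.init n) hinit
    have hsrc2 : Λ.src l₂ = M.r x := by
      rw [← he, ← hcomp]; exact (Λ.src_comp l₁ l₂ hsr).symm
    rcases Nat.add_eq_one_iff.mp hlast with ⟨hm0, hn1⟩ | ⟨hm1, hn0⟩
    · -- left factor in Λ, right factor in E
      refine ⟨(.inl l₁, .inr (.inr ⟨(l₂, x), hsrc2⟩)),
        ⟨by simp [lsrc, lrng, hsr], ?_, ?_, ?_⟩, ?_⟩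
      · simp only [ld, hd1]; exact snoc_init_of_last hm0
      · simp only [ld, hd2]; exact snoc_init_of_last hn1
      · simp only [lcomp, hsr, dif_pos]
        congr 2
        exact Subtype.ext (by simp [hcomp])
      · rintro ⟨a, b⟩ ⟨hab, hda, hdb, hc⟩
        rcases b with b | b | ⟨⟨l', x'⟩, he'⟩
        · have := congrArg (fun g => g (Fin.last k)) hdb
          simp [ld, hn1] at this
        · have := congrArg (fun g => g (Fin.last k)) hdb
          simp [ld, hn1] at this
        · rcases a with a | a | ⟨⟨l, x₀⟩, he₀⟩
          · simp only [lsrc, lrng, Sum.inl.injEq] at hab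
            simp only [lcomp, hab, dif_pos, Sum.inr.injEq] at hc
            simp only [Sum.inr.injEq, Subtype.mk.injEq, Prod.mk.injEq] at hc
            have hc' := hc
            have hda' : Λ.d a = Fin.init m := by
              have := congrArg Fin.init hda; simpa [ld, Fin.init_snoc] using this
            have hdb' : Λ.d l' = Fin.init n := by
              have := congrArg Fin.init hdb; simpa [ld, Fin.init_snoc] using this
            have := huniq (a, l') ⟨hab, hda', hdb', hc'.1⟩
            simp only [Prod.mk.injEq] at this
            refine Prod.ext ?_ ?_
            · simp [this.1]
            · simp only
              congr 2
              exact Subtype.ext (by simp [this.2, hc'.2])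
          · simp [lsrc, lrng] at hab
          · have := congrArg (fun g => g (Fin.last k)) hda
            simp [ld, hm0] at this
    · -- left factor in E, right factor in Γ
      obtain ⟨⟨x₁, γ⟩, ⟨hbs, hbl, hbx⟩, hbuniq⟩ := M.bij l₂ x hsrc2
      have hsrc1 : Λ.src l₁ = M.r x₁ := by
        rw [hsr, ← hbl, M.rng_φl x₁ γ hbs]
      have hdγ : Γ.d γ = Fin.init n := by rw [← M.d_φl x₁ γ hbs, hbl]; exact hd2
      refine ⟨(.inr (.inr ⟨(l₁, x₁), hsrc1⟩), .inr (.inl γ)),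
        ⟨by simp only [lsrc, lrng, Sum.inr.injEq]; rw [hbs], ?_, ?_, ?_⟩, ?_⟩
      · simp only [ld, hd1]; exact snoc_init_of_last hm1
      · simp only [ld, hdγ]; exact snoc_init_of_last hn0
      · simp only [lcomp, hbs, dif_pos]
        congr 2
        refine Subtype.ext ?_
        simp only
        rw [hbl, hbx, hcomp]
      · rintro ⟨a, b⟩ ⟨hab, hda, hdb, hc⟩
        rcases a with a | a | ⟨⟨l, x₀⟩, he₀⟩
        · have := congrArg (fun g => g (Fin.last k)) hda
          simp [ld, hm1] at this
        · have := congrArg (fun g => g (Fin.last k)) hda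
          simp [ld, hm1] at this
        · rcases b with b | b | ⟨⟨l', x'⟩, he'⟩
          · simp [lsrc, lrng] at hab
          · simp only [lsrc, lrng, Sum.inr.injEq] at hab
            simp only [lcomp, hab, dif_pos, Sum.inr.injEq] at hc
            simp only [Sum.inr.injEq, Subtype.mk.injEq, Prod.mk.injEq] at hc
            have hc' := hc
            have hda' : Λ.d l = Fin.init m := by
              have := congrArg Fin.init hda; simpa [ld, Fin.init_snoc] using this
            have hdb' : Γ.d b = Fin.init n := by
              have := congrArg Fin.init hdb; simpa [ld, Fin.init_snoc] using this
            have hrngφ : Λ.rng (M.φl x₀ b) = M.r x₀ := M.rng_φl x₀ b hab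
            have hL := huniq (l, M.φl x₀ b)
              ⟨by rw [hrngφ]; exact he₀, hda', by rw [M.d_φl x₀ b hab]; exact hdb', hc'.1⟩
            simp only [Prod.mk.injEq] at hL
            have hB := hbuniq (x₀, b) ⟨hab, by rw [hL.2.symm], hc'.2⟩
            simp only [Prod.mk.injEq] at hB
            refine Prod.ext ?_ ?_
            · simp only
              congr 2
              exact Subtype.ext (by simp [hL.1, hB.1])
            · simp [hB.2]
          · have := congrArg (fun g => g (Fin.last k)) hdb
            simp [ld, hn0] at this

end Factor
end
end LinkAux
namespace LinkAux
noncomputable section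
open Classical

section Existence2

variable {k : ℕ} {OΛ PΛ OΓ PΓ X : Type}
  {Λ : KGraphStr k OΛ PΛ} {Γ : KGraphStr k OΓ PΓ} {M : KMorph Λ Γ X}

lemma ecar_countable : Countable (ECar Λ Γ M) := by
  have := Λ.countable
  have := M.countable
  exact Subtype.countable

lemma pacar_countable : Countable (PaCar Λ Γ M) := by
  have := Λ.countable
  have := Γ.countable
  have := ecar_countable (Λ := Λ) (Γ := Γ) (M := M)
  unfold PaCar
  infer_instance

def linkS (Λ : KGraphStr k OΛ PΛ) (Γ : KGraphStr k OΓ PΓ) (M : KMorph Λ Γ X) :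
    KGraphStr (k+1) (OΛ ⊕ OΓ) (PaCar Λ Γ M) where
  src := lsrc
  rng := lrng
  ident := lident
  comp := lcomp
  d := ld
  countable := pacar_countable
  nonemptyObj := ⟨.inl Λ.nonemptyObj.some⟩
  src_ident v := by cases v <;> simp [lident, lsrc, Λ.src_ident, Γ.src_ident]
  rng_ident v := by cases v <;> simp [lident, lrng, Λ.rng_ident, Γ.rng_ident]
  d_ident v := by cases v <;> simp [lident, ld, Λ.d_ident, Γ.d_ident, snoc_zero_zero]
  src_comp p q h := by
    match p, q with
    | .inl p, .inl q =>
        simp only [lsrc, lrng, Sum.inl.injEq] at h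
        simp [lcomp, lsrc, Λ.src_comp p q h]
    | .inl p, .inr (.inl q) => simp [lsrc, lrng] at h
    | .inl p, .inr (.inr e) =>
        simp only [lsrc, lrng, Sum.inl.injEq] at h
        simp [lcomp, h, lsrc]
    | .inr (.inl p), .inl q => simp [lsrc, lrng] at h
    | .inr (.inl p), .inr (.inl q) =>
        simp only [lsrc, lrng, Sum.inr.injEq] at h
        simp [lcomp, lsrc, Γ.src_comp p q h]
    | .inr (.inl p), .inr (.inr e) => simp [lsrc, lrng] at h
    | .inr (.inr e), .inl q => simp [lsrc, lrng] at h
    | .inr (.inr e), .inr (.inl q) =>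
        simp only [lsrc, lrng, Sum.inr.injEq] at h
        simp only [lcomp, h, dif_pos]
        simp [lsrc, M.s_φx e.1.2 q h]
    | .inr (.inr e), .inr (.inr f) => simp [lsrc, lrng] at h
  rng_comp p q h := by
    match p, q with
    | .inl p, .inl q =>
        simp only [lsrc, lrng, Sum.inl.injEq] at h
        simp [lcomp, lrng, Λ.rng_comp p q h]
    | .inl p, .inr (.inl q) => simp [lsrc, lrng] at h
    | .inl p, .inr (.inr e) =>
        simp only [lsrc, lrng, Sum.inl.injEq] at h
        simp [lcomp, h, lrng, Λ.rng_comp _ _ h]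
    | .inr (.inl p), .inl q => simp [lsrc, lrng] at h
    | .inr (.inl p), .inr (.inl q) =>
        simp only [lsrc, lrng, Sum.inr.injEq] at h
        simp [lcomp, lrng, Γ.rng_comp p q h]
    | .inr (.inl p), .inr (.inr e) => simp [lsrc, lrng] at h
    | .inr (.inr e), .inl q => simp [lsrc, lrng] at h
    | .inr (.inr e), .inr (.inl q) =>
        simp only [lsrc, lrng, Sum.inr.injEq] at h
        simp only [lcomp, h, dif_pos]
        simp [lrng, Λ.rng_comp _ _ (by rw [M.rng_φl e.1.2 q h]; exact e.2)]
    | .inr (.inr e), .inr (.inr f) => simp [lsrc, lrng] at h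
  d_comp p q h := by
    match p, q with
    | .inl p, .inl q =>
        simp only [lsrc, lrng, Sum.inl.injEq] at h
        simp [lcomp, ld, Λ.d_comp p q h, snoc_add]
    | .inl p, .inr (.inl q) => simp [lsrc, lrng] at h
    | .inl p, .inr (.inr e) =>
        simp only [lsrc, lrng, Sum.inl.injEq] at h
        simp [lcomp, h, ld, Λ.d_comp _ _ h, snoc_add]
    | .inr (.inl p), .inl q => simp [lsrc, lrng] at h
    | .inr (.inl p), .inr (.inl q) =>
        simp only [lsrc, lrng, Sum.inr.injEq] at h
        simp [lcomp, ld, Γ.d_comp p q h, snoc_add]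
    | .inr (.inl p), .inr (.inr e) => simp [lsrc, lrng] at h
    | .inr (.inr e), .inl q => simp [lsrc, lrng] at h
    | .inr (.inr e), .inr (.inl q) =>
        simp only [lsrc, lrng, Sum.inr.injEq] at h
        simp only [lcomp, h, dif_pos]
        simp [ld, Λ.d_comp _ _ (by rw [M.rng_φl e.1.2 q h]; exact e.2),
          M.d_φl e.1.2 q h, snoc_add]
    | .inr (.inr e), .inr (.inr f) => simp [lsrc, lrng] at h
  comp_ident p := by
    match p with
    | .inl p => simp [lsrc, lident, lcomp, Λ.comp_ident]
    | .inr (.inl q) => simp [lsrc, lident, lcomp, Γ.comp_ident]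
    | .inr (.inr ⟨⟨l, x⟩, he⟩) =>
        have hc : M.s x = Γ.rng (Γ.ident (M.s x)) := by rw [Γ.rng_ident]
        simp only [lsrc, lident, lcomp, hc.symm, dif_pos]
        congr 2
        apply Subtype.ext
        simp only
        rw [phl_ident, phx_ident]
        rw [← he, Λ.comp_ident]
  ident_comp p := by
    match p with
    | .inl p => simp [lrng, lident, lcomp, Λ.ident_comp]
    | .inr (.inl q) => simp [lrng, lident, lcomp, Γ.ident_comp]
    | .inr (.inr ⟨⟨l, x⟩, he⟩) =>
        have hc : Λ.src (Λ.ident (Λ.rng l)) = Λ.rng l := Λ.src_ident _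
        simp only [lrng, lident, lcomp, hc, dif_pos]
        congr 2
        apply Subtype.ext
        simp only
        rw [Λ.ident_comp]
  comp_assoc p q r hpq hqr := by
    rcases p with p | p | ⟨⟨l, x⟩, he⟩ <;> rcases q with q | q | ⟨⟨l', x'⟩, he'⟩ <;>
      rcases r with r | r | ⟨⟨l'', x''⟩, he''⟩ <;>
      try (exfalso; simp [lsrc, lrng] at hpq hqr; done)
    -- ΛΛΛ
    · simp only [lsrc, lrng, Sum.inl.injEq] at hpq hqr
      simp [lcomp, Λ.comp_assoc p q r hpq hqr]
    -- ΛΛE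
    · simp only [lsrc, lrng, Sum.inl.injEq] at hpq hqr
      simp only [lcomp, hqr, dif_pos]
      have h2 : Λ.src (Λ.comp p q) = Λ.rng l'' := by
        rw [Λ.src_comp p q hpq]; exact hqr
      simp only [lcomp, h2, dif_pos]
      rw [dif_pos (by rw [Λ.rng_comp q l'' hqr]; exact hpq)]
      congr 2
      apply Subtype.ext
      simp only
      rw [Λ.comp_assoc p q l'' hpq hqr]
    -- ΛEΓ
    · simp only [lsrc, lrng, Sum.inl.injEq, Sum.inr.injEq] at hpq hqr
      have hax : Λ.rng (M.φl x' r) = Λ.src l' := (M.rng_φl x' r hqr).trans he'.symm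
      have h1 : Λ.rng l' = Λ.rng (Λ.comp l' (M.φl x' r)) :=
        (Λ.rng_comp l' (M.φl x' r) hax.symm).symm
      simp only [lcomp, hpq, dif_pos, hqr]
      rw [dif_pos h1]
      congr 2
      apply Subtype.ext
      simp only
      rw [Λ.comp_assoc p l' (M.φl x' r) hpq hax.symm]
    -- ΓΓΓ
    · simp only [lsrc, lrng, Sum.inr.injEq] at hpq hqr
      simp [lcomp, Γ.comp_assoc p q r hpq hqr]
    -- EΓΓ
    · simp only [lsrc, lrng, Sum.inr.injEq] at hpq hqr
      have hs2 : M.s (M.φx x q) = Γ.rng r := by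
        rw [M.s_φx x q hpq]; exact hqr
      have hc2 : Γ.rng q = Γ.rng (Γ.comp q r) := (Γ.rng_comp q r hqr).symm
      simp only [lcomp, hpq, dif_pos]
      simp only [lcomp, hs2, dif_pos]
      rw [dif_pos hc2]
      congr 2
      apply Subtype.ext
      simp only
      rw [M.mult_φl x q r hpq hqr, M.mult_φx x q r hpq hqr]
      rw [Λ.comp_assoc l (M.φl x q) (M.φl (M.φx x q) r)
        (by rw [M.rng_φl x q hpq]; exact he)
        (by rw [M.rng_φl (M.φx x q) r hs2]; exact M.src_φl x q hpq)]
  factor := link_factor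

end Existence2
end
end LinkAux
namespace LinkAux
noncomputable section
open Classical

section LinkInst

variable {k : ℕ} {OΛ PΛ OΓ PΓ X : Type}
  {Λ : KGraphStr k OΛ PΛ} {Γ : KGraphStr k OΓ PΓ} {M : KMorph Λ Γ X}

/-- The edge associated with `x : X`. -/
def edgeOf (M : KMorph Λ Γ X) (x : X) : PaCar Λ Γ M :=
  .inr (.inr ⟨(Λ.ident (M.r x), x), Λ.src_ident _⟩)

lemma ld_edgeOf (x : X) : ld (M := M) (edgeOf M x) = Fin.snoc (0 : Fin k → ℕ) 1 := by
  simp [edgeOf, ld, Λ.d_ident]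

def psi (M : KMorph Λ Γ X) :
    X ≃ {σ : PaCar Λ Γ M // ld σ = Fin.snoc (0 : Fin k → ℕ) 1} := by
  refine Equiv.ofBijective (fun x => ⟨edgeOf M x, ld_edgeOf x⟩) ⟨?_, ?_⟩
  · intro x y hxy
    simp only [Subtype.mk.injEq, edgeOf, Sum.inr.injEq, Subtype.mk.injEq,
      Prod.mk.injEq] at hxy
    exact hxy.2
  · rintro ⟨σ, hσ⟩
    rcases σ with p | p | ⟨⟨l, x⟩, he⟩
    · have := congrArg (fun g => g (Fin.last k)) hσ
      simp [ld] at this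
    · have := congrArg (fun g => g (Fin.last k)) hσ
      simp [ld] at this
    · refine ⟨x, ?_⟩
      have hdl : Λ.d l = 0 := by
        have := congrArg Fin.init hσ
        simpa [ld, Fin.init_snoc] using this
      have hl : l = Λ.ident (M.r x) := by
        rw [(deg_zero_ident Λ hdl).1, he]
      apply Subtype.ext
      simp only [edgeOf, Sum.inr.injEq, Subtype.mk.injEq, Prod.mk.injEq]
      exact ⟨hl.symm, trivial⟩

def linkOf (Λ : KGraphStr k OΛ PΛ) (Γ : KGraphStr k OΓ PΓ) (M : KMorph Λ Γ X) :
    Linking Λ Γ M where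
  Ob := OΛ ⊕ OΓ
  Pa := PaCar Λ Γ M
  S := linkS Λ Γ M
  ivΛ := .inl
  ivΓ := .inr
  ipΛ := .inl
  ipΓ := fun q => .inr (.inl q)
  dΛ p := rfl
  dΓ p := rfl
  srcΛ p := rfl
  rngΛ p := rfl
  srcΓ p := rfl
  rngΓ p := rfl
  identΛ v := rfl
  identΓ w := rfl
  compΛ p q h := rfl
  compΓ p q h := rfl
  inj := by
    rintro (p | p) (q | q) h <;> simp_all
  surjι σ h := by
    rcases σ with p | p | ⟨⟨l, x⟩, he⟩
    · exact .inl ⟨p, rfl⟩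
    · exact .inr ⟨p, rfl⟩
    · simp [linkS, ld] at h
  edge_src σ h := by
    rcases σ with p | p | ⟨⟨l, x⟩, he⟩
    · have := congrArg (fun g => g (Fin.last k)) h
      simp [linkS, ld] at this
    · have := congrArg (fun g => g (Fin.last k)) h
      simp [linkS, ld] at this
    · exact ⟨M.s x, rfl⟩
  edge_rng σ h := by
    rcases σ with p | p | ⟨⟨l, x⟩, he⟩
    · have := congrArg (fun g => g (Fin.last k)) h
      simp [linkS, ld] at this
    · have := congrArg (fun g => g (Fin.last k)) h
      simp [linkS, ld] at this
    · exact ⟨Λ.rng l, rfl⟩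
  ψ := psi M
  ψ_rng x := by
    show lrng (edgeOf M x) = Sum.inl (M.r x)
    simp [psi, linkS, lrng, edgeOf, Λ.rng_ident]
  ψ_src x := by
    show lsrc (edgeOf M x) = Sum.inr (M.s x)
    simp [psi, linkS, lsrc, edgeOf]
  ψ_φ x γ h := by
    have h1 : M.s x = Γ.rng γ := h
    show lcomp (edgeOf M x) (.inr (.inl γ)) = lcomp (.inl (M.φl x γ)) (edgeOf M (M.φx x γ))
    have hc2 : Λ.src (M.φl x γ) = Λ.rng (Λ.ident (M.r (M.φx x γ))) := by
      rw [Λ.rng_ident]; exact M.src_φl x γ h1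
    simp only [edgeOf, lcomp, h1, dif_pos, hc2, dif_pos]
    congr 2
    apply Subtype.ext
    simp only [Prod.mk.injEq]
    refine ⟨?_, trivial⟩
    conv_lhs => rw [← M.rng_φl x γ h1]
    rw [Λ.ident_comp]
    conv_rhs => rw [← M.src_φl x γ h1]
    rw [Λ.comp_ident]

end LinkInst
end
end LinkAux
namespace LinkAux
noncomputable section
open Classical

section Uniq

variable {k : ℕ} {OΛ PΛ OΓ PΓ X : Type}
  {Λ : KGraphStr k OΛ PΛ} {Γ : KGraphStr k OΓ PΓ} {M : KMorph Λ Γ X}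

variable (L : Linking Λ Γ M)

lemma ipΛ_inj : Function.Injective L.ipΛ := fun p q h => by
  have := L.inj (a₁ := .inl p) (a₂ := .inl q) (by simpa using h)
  simpa using this

lemma ipΓ_inj : Function.Injective L.ipΓ := fun p q h => by
  have := L.inj (a₁ := .inr p) (a₂ := .inr q) (by simpa using h)
  simpa using this

lemma ipΛ_ne_ipΓ (p : PΛ) (q : PΓ) : L.ipΛ p ≠ L.ipΓ q := fun h => by
  have := L.inj (a₁ := .inl p) (a₂ := .inr q) (by simpa using h)
  simp at this

lemma ivΛ_inj : Function.Injective L.ivΛ := fun v w h => by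
  have : L.ipΛ (Λ.ident v) = L.ipΛ (Λ.ident w) := by
    rw [← L.identΛ, ← L.identΛ, h]
  have h2 := ipΛ_inj L this
  have := congrArg Λ.src h2
  rwa [Λ.src_ident, Λ.src_ident] at this

lemma ivΓ_inj : Function.Injective L.ivΓ := fun v w h => by
  have : L.ipΓ (Γ.ident v) = L.ipΓ (Γ.ident w) := by
    rw [← L.identΓ, ← L.identΓ, h]
  have h2 := ipΓ_inj L this
  have := congrArg Γ.src h2
  rwa [Γ.src_ident, Γ.src_ident] at this

lemma ivΛ_ne_ivΓ (v : OΛ) (w : OΓ) : L.ivΛ v ≠ L.ivΓ w := fun h => by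
  have : L.ipΛ (Λ.ident v) = L.ipΓ (Γ.ident w) := by
    rw [← L.identΛ, ← L.identΓ, h]
  exact ipΛ_ne_ipΓ L _ _ this

/-- every path has last-coordinate degree at most 1 -/
lemma last_le_one (σ : L.Pa) : L.S.d σ (Fin.last k) ≤ 1 := by
  by_contra hgt
  push_neg at hgt
  set c := L.S.d σ (Fin.last k) with hc
  have hd1 : L.S.d σ = Fin.snoc (Fin.init (L.S.d σ)) (c - 1) +
      Fin.snoc (0 : Fin k → ℕ) 1 := by
    rw [snoc_add, add_zero]
    rw [show c - 1 + 1 = c from by omega]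
    exact (snoc_init_of_last rfl).symm
  obtain ⟨⟨μ, ν⟩, ⟨hsr, hdμ, hdν, hcomp⟩, _⟩ :=
    L.S.factor σ _ _ hd1
  obtain ⟨v, hv⟩ := L.edge_rng ν hdν
  have hdμ' : L.S.d μ = Fin.snoc (Fin.init (L.S.d μ)) (c - 2) +
      Fin.snoc (0 : Fin k → ℕ) 1 := by
    rw [snoc_add, add_zero]
    rw [show c - 2 + 1 = c - 1 from by omega]
    rw [hdμ, Fin.init_snoc]
  obtain ⟨⟨α, β⟩, ⟨hsr2, hdα, hdβ, hcomp2⟩, _⟩ := L.S.factor μ _ _ hdμ'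
  obtain ⟨w, hw⟩ := L.edge_src β hdβ
  have : L.S.src μ = L.S.src β := by
    rw [← hcomp2]; exact L.S.src_comp α β hsr2
  rw [hsr, hv, hw] at this
  exact ivΛ_ne_ivΓ L v w this

/-- normal form for paths of last degree 1 -/
lemma nf (σ : L.Pa) (hσ : L.S.d σ (Fin.last k) = 1) :
    ∃! p : PΛ × X, Λ.src p.1 = M.r p.2 ∧
      L.S.comp (L.ipΛ p.1) (L.ψ p.2).1 = σ := by
  have hd1 : L.S.d σ = Fin.snoc (Fin.init (L.S.d σ)) 0 +
      Fin.snoc (0 : Fin k → ℕ) 1 := by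
    rw [snoc_add, add_zero, zero_add]
    exact (snoc_init_of_last hσ).symm
  obtain ⟨⟨μ, ν⟩, ⟨hsr, hdμ, hdν, hcomp⟩, huniq⟩ := L.S.factor σ _ _ hd1
  set x := L.ψ.symm ⟨ν, hdν⟩ with hx
  have hν : (L.ψ x).1 = ν := by rw [hx, Equiv.apply_symm_apply]
  have hrν : L.S.rng ν = L.ivΛ (M.r x) := by rw [← hν]; exact L.ψ_rng x
  have hμ : ∃ l, μ = L.ipΛ l := by
    rcases L.surjι μ (by rw [hdμ]; simp) with ⟨l, hl⟩ | ⟨g, hg⟩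
    · exact ⟨l, hl⟩
    · exfalso
      have : L.S.src μ = L.ivΓ (Γ.src g) := by rw [hg, L.srcΓ]
      rw [hsr, hrν] at this
      exact ivΛ_ne_ivΓ L _ _ this
  obtain ⟨l, hl⟩ := hμ
  have hsl : Λ.src l = M.r x := by
    apply ivΛ_inj L
    rw [← L.srcΛ, ← hl, hsr, hrν]
  refine ⟨(l, x), ⟨hsl, by rw [← hl, hν, hcomp]⟩, ?_⟩
  rintro ⟨l', x'⟩ ⟨hsl', hcomp'⟩
  have hcpb : L.S.src (L.ipΛ l') = L.S.rng (L.ψ x').1 := by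
    rw [L.srcΛ, L.ψ_rng, hsl']
  have hdl' : (Fin.snoc (Λ.d l') 0 : Fin (k+1) → ℕ) =
      Fin.snoc (Fin.init (L.S.d σ)) 0 := by
    have hdσ : L.S.d σ = Fin.snoc (Λ.d l') 1 := by
      rw [← hcomp', L.S.d_comp _ _ hcpb, L.dΛ, (L.ψ x').2, snoc_add, add_zero,
        zero_add]
    rw [hdσ, Fin.init_snoc]
  have := huniq (L.ipΛ l', (L.ψ x').1)
    ⟨hcpb, by rw [L.dΛ]; exact hdl', (L.ψ x').2, hcomp'⟩
  simp only [Prod.mk.injEq] at this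
  have h1 : l' = l := ipΛ_inj L (by rw [this.1, hl])
  have h2 : x' = x := by
    apply L.ψ.injective
    apply Subtype.ext
    rw [this.2, hν]
  simp [h1, h2]

lemma ob_cases (o : L.Ob) : (∃ v, o = L.ivΛ v) ∨ (∃ w, o = L.ivΓ w) := by
  have hd : L.S.d (L.S.ident o) (Fin.last k) = 0 := by rw [L.S.d_ident]; rfl
  rcases L.surjι _ hd with ⟨p, hp⟩ | ⟨q, hq⟩
  · left
    refine ⟨Λ.rng p, ?_⟩
    rw [← L.rngΛ, ← hp, L.S.rng_ident]
  · right
    refine ⟨Γ.rng q, ?_⟩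
    rw [← L.rngΓ, ← hq, L.S.rng_ident]

lemma pa_cases (σ : L.Pa) : (∃ p, σ = L.ipΛ p) ∨ (∃ q, σ = L.ipΓ q) ∨
    ∃ l x, Λ.src l = M.r x ∧ σ = L.S.comp (L.ipΛ l) (L.ψ x).1 := by
  rcases Nat.le_one_iff_eq_zero_or_eq_one.mp (last_le_one L σ) with h0 | h1
  · rcases L.surjι σ h0 with h | h
    · exact .inl h
    · exact .inr (.inl h)
  · obtain ⟨⟨l, x⟩, ⟨hc, heq⟩, _⟩ := nf L σ h1
    exact .inr (.inr ⟨l, x, hc, heq.symm⟩)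

end Uniq
end
end LinkAux
namespace LinkAux
noncomputable section
open Classical

section Uniq2

variable {k : ℕ} {OΛ PΛ OΓ PΓ X : Type}
  {Λ : KGraphStr k OΛ PΛ} {Γ : KGraphStr k OΓ PΓ} {M : KMorph Λ Γ X}

variable (L L' : Linking Λ Γ M)

/-- normal-form facts -/
lemma nf_cpb {l : PΛ} {x : X} (h : Λ.src l = M.r x) :
    L.S.src (L.ipΛ l) = L.S.rng (L.ψ x).1 := by
  rw [L.srcΛ, L.ψ_rng, h]

lemma nf_d {l : PΛ} {x : X} (h : Λ.src l = M.r x) :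
    L.S.d (L.S.comp (L.ipΛ l) (L.ψ x).1) = Fin.snoc (Λ.d l) 1 := by
  rw [L.S.d_comp _ _ (nf_cpb L h), L.dΛ, (L.ψ x).2, snoc_add, add_zero, zero_add]

lemma nf_src {l : PΛ} {x : X} (h : Λ.src l = M.r x) :
    L.S.src (L.S.comp (L.ipΛ l) (L.ψ x).1) = L.ivΓ (M.s x) := by
  rw [L.S.src_comp _ _ (nf_cpb L h), L.ψ_src]

lemma nf_rng {l : PΛ} {x : X} (h : Λ.src l = M.r x) :
    L.S.rng (L.S.comp (L.ipΛ l) (L.ψ x).1) = L.ivΛ (Λ.rng l) := by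
  rw [L.S.rng_comp _ _ (nf_cpb L h), L.rngΛ]

lemma nfA {a l : PΛ} {x : X} (ha : Λ.src a = Λ.rng l) (h : Λ.src l = M.r x) :
    L.S.comp (L.ipΛ a) (L.S.comp (L.ipΛ l) (L.ψ x).1) =
      L.S.comp (L.ipΛ (Λ.comp a l)) (L.ψ x).1 := by
  rw [← L.compΛ a l ha]
  rw [L.S.comp_assoc _ _ _ (by rw [L.srcΛ, L.rngΛ, ha]) (nf_cpb L h)]

lemma nfB {l : PΛ} {x : X} {γ : PΓ} (h : Λ.src l = M.r x) (hγ : M.s x = Γ.rng γ) :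
    L.S.comp (L.S.comp (L.ipΛ l) (L.ψ x).1) (L.ipΓ γ) =
      L.S.comp (L.ipΛ (Λ.comp l (M.φl x γ))) (L.ψ (M.φx x γ)).1 := by
  have h1 : L.S.src (L.ψ x).1 = L.S.rng (L.ipΓ γ) := by
    rw [L.ψ_src, L.rngΓ, hγ]
  rw [L.S.comp_assoc _ _ _ (nf_cpb L h) h1, L.ψ_φ x γ hγ]
  have h2 : Λ.src l = Λ.rng (M.φl x γ) := by rw [M.rng_φl x γ hγ]; exact h
  have h3 : Λ.src (M.φl x γ) = M.r (M.φx x γ) := M.src_φl x γ hγ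
  exact nfA L h2 h3

def evMap : L.Ob → L'.Ob := fun o =>
  if h : ∃ v, o = L.ivΛ v then L'.ivΛ h.choose
  else L'.ivΓ ((ob_cases L o).resolve_left h).choose

lemma evΛ (v : OΛ) : evMap L L' (L.ivΛ v) = L'.ivΛ v := by
  have h : ∃ v', L.ivΛ v = L.ivΛ v' := ⟨v, rfl⟩
  rw [evMap, dif_pos h]
  congr 1
  exact (ivΛ_inj L h.choose_spec).symm

lemma evΓ (w : OΓ) : evMap L L' (L.ivΓ w) = L'.ivΓ w := by
  have h : ¬ ∃ v', L.ivΓ w = L.ivΛ v' := by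
    rintro ⟨v', hv⟩; exact ivΛ_ne_ivΓ L v' w hv.symm
  rw [evMap, dif_neg h]
  congr 1
  exact (ivΓ_inj L ((ob_cases L _).resolve_left h).choose_spec).symm

def epMap : L.Pa → L'.Pa := fun σ =>
  if h : ∃ p, σ = L.ipΛ p then L'.ipΛ h.choose
  else if h2 : ∃ q, σ = L.ipΓ q then L'.ipΓ h2.choose
  else
    L'.S.comp (L'.ipΛ (((pa_cases L σ).resolve_left h).resolve_left h2).choose)
      (L'.ψ (((pa_cases L σ).resolve_left h).resolve_left h2).choose_spec.choose).1

lemma epΛ (p : PΛ) : epMap L L' (L.ipΛ p) = L'.ipΛ p := by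
  have h : ∃ p', L.ipΛ p = L.ipΛ p' := ⟨p, rfl⟩
  rw [epMap, dif_pos h]
  congr 1
  exact (ipΛ_inj L h.choose_spec).symm

lemma epΓ (q : PΓ) : epMap L L' (L.ipΓ q) = L'.ipΓ q := by
  have h : ¬ ∃ p', L.ipΓ q = L.ipΛ p' := by
    rintro ⟨p', hp⟩; exact ipΛ_ne_ipΓ L p' q hp.symm
  have h2 : ∃ q', L.ipΓ q = L.ipΓ q' := ⟨q, rfl⟩
  rw [epMap, dif_neg h, dif_pos h2]
  congr 1
  exact (ipΓ_inj L h2.choose_spec).symm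

lemma epNF {l : PΛ} {x : X} (hc : Λ.src l = M.r x) :
    epMap L L' (L.S.comp (L.ipΛ l) (L.ψ x).1) =
      L'.S.comp (L'.ipΛ l) (L'.ψ x).1 := by
  set σ := L.S.comp (L.ipΛ l) (L.ψ x).1 with hσ
  have hdσ : L.S.d σ (Fin.last k) = 1 := by
    rw [hσ, nf_d L hc]; simp
  have h : ¬ ∃ p, σ = L.ipΛ p := by
    rintro ⟨p, hp⟩
    rw [hp, L.dΛ] at hdσ; simp at hdσ
  have h2 : ¬ ∃ q, σ = L.ipΓ q := by
    rintro ⟨q, hq⟩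
    rw [hq, L.dΓ] at hdσ; simp at hdσ
  rw [epMap]
  rw [dif_neg h, dif_neg h2]
  set E := ((pa_cases L σ).resolve_left h).resolve_left h2 with hE
  obtain ⟨hcE, heqE⟩ := E.choose_spec.choose_spec
  have := (nf L σ hdσ).unique (y₁ := (E.choose, E.choose_spec.choose))
    (y₂ := (l, x)) ⟨hcE, heqE.symm⟩ ⟨hc, hσ.symm⟩
  simp only [Prod.mk.injEq] at this
  rw [this.2, this.1]

end Uniq2
end
end LinkAux
namespace LinkAux
noncomputable section
open Classical

section Uniq3

variable {k : ℕ} {OΛ PΛ OΓ PΓ X : Type}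
  {Λ : KGraphStr k OΛ PΛ} {Γ : KGraphStr k OΓ PΓ} {M : KMorph Λ Γ X}

variable (L L' : Linking Λ Γ M)

lemma evMap_inv (o : L.Ob) : evMap L' L (evMap L L' o) = o := by
  rcases ob_cases L o with ⟨v, rfl⟩ | ⟨w, rfl⟩
  · rw [evΛ, evΛ]
  · rw [evΓ, evΓ]

lemma epMap_inv (σ : L.Pa) : epMap L' L (epMap L L' σ) = σ := by
  rcases pa_cases L σ with ⟨p, rfl⟩ | ⟨q, rfl⟩ | ⟨l, x, hc, rfl⟩
  · rw [epΛ, epΛ]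
  · rw [epΓ, epΓ]
  · rw [epNF L L' hc, epNF L' L hc]

def linkIso : GraphIso L.S L'.S where
  ev := ⟨evMap L L', evMap L' L, evMap_inv L L', evMap_inv L' L⟩
  ep := ⟨epMap L L', epMap L' L, epMap_inv L L', epMap_inv L' L⟩
  src_ep σ := by
    show L'.S.src (epMap L L' σ) = evMap L L' (L.S.src σ)
    rcases pa_cases L σ with ⟨p, rfl⟩ | ⟨q, rfl⟩ | ⟨l, x, hc, rfl⟩
    · rw [epΛ, L'.srcΛ, L.srcΛ, evΛ]
    · rw [epΓ, L'.srcΓ, L.srcΓ, evΓ]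
    · rw [epNF L L' hc, nf_src L' hc, nf_src L hc, evΓ]
  rng_ep σ := by
    show L'.S.rng (epMap L L' σ) = evMap L L' (L.S.rng σ)
    rcases pa_cases L σ with ⟨p, rfl⟩ | ⟨q, rfl⟩ | ⟨l, x, hc, rfl⟩
    · rw [epΛ, L'.rngΛ, L.rngΛ, evΛ]
    · rw [epΓ, L'.rngΓ, L.rngΓ, evΓ]
    · rw [epNF L L' hc, nf_rng L' hc, nf_rng L hc, evΛ]
  d_ep σ := by
    show L'.S.d (epMap L L' σ) = L.S.d σ
    rcases pa_cases L σ with ⟨p, rfl⟩ | ⟨q, rfl⟩ | ⟨l, x, hc, rfl⟩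
    · rw [epΛ, L'.dΛ, L.dΛ]
    · rw [epΓ, L'.dΓ, L.dΓ]
    · rw [epNF L L' hc, nf_d L' hc, nf_d L hc]
  ident_ep o := by
    show epMap L L' (L.S.ident o) = L'.S.ident (evMap L L' o)
    rcases ob_cases L o with ⟨v, rfl⟩ | ⟨w, rfl⟩
    · rw [L.identΛ, epΛ, evΛ, L'.identΛ]
    · rw [L.identΓ, epΓ, evΓ, L'.identΓ]
  comp_ep σ τ h := by
    show epMap L L' (L.S.comp σ τ) =
      L'.S.comp (epMap L L' σ) (epMap L L' τ)
    rcases pa_cases L σ with ⟨p, rfl⟩ | ⟨q, rfl⟩ | ⟨l, x, hc, rfl⟩ <;>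
      rcases pa_cases L τ with ⟨p', rfl⟩ | ⟨q', rfl⟩ | ⟨l', x', hc', rfl⟩
    · -- Λ Λ
      have hcc : Λ.src p = Λ.rng p' := by
        apply ivΛ_inj L; rw [← L.srcΛ, ← L.rngΛ, h]
      rw [L.compΛ p p' hcc, epΛ, epΛ, epΛ, L'.compΛ p p' hcc]
    · -- Λ Γ : impossible
      exfalso
      rw [L.srcΛ, L.rngΓ] at h
      exact ivΛ_ne_ivΓ L _ _ h
    · -- Λ NF
      have hcc : Λ.src p = Λ.rng l' := by
        apply ivΛ_inj L; rw [← L.srcΛ, ← nf_rng L hc', h]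
      have hc2 : Λ.src (Λ.comp p l') = M.r x' := by
        rw [Λ.src_comp p l' hcc]; exact hc'
      rw [nfA L hcc hc', epNF L L' hc2, epΛ, epNF L L' hc', ← nfA L' hcc hc']
    · -- Γ Λ : impossible
      exfalso
      rw [L.srcΓ, L.rngΛ] at h
      exact (ivΛ_ne_ivΓ L _ _ h.symm)
    · -- Γ Γ
      have hcc : Γ.src q = Γ.rng q' := by
        apply ivΓ_inj L; rw [← L.srcΓ, ← L.rngΓ, h]
      rw [L.compΓ q q' hcc, epΓ, epΓ, epΓ, L'.compΓ q q' hcc]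
    · -- Γ NF : impossible
      exfalso
      rw [L.srcΓ, nf_rng L hc'] at h
      exact (ivΛ_ne_ivΓ L _ _ h.symm)
    · -- NF Λ : impossible
      exfalso
      rw [nf_src L hc, L.rngΛ] at h
      exact (ivΛ_ne_ivΓ L _ _ h.symm)
    · -- NF Γ
      have hcc : M.s x = Γ.rng q' := by
        apply ivΓ_inj L; rw [← nf_src L hc, ← L.rngΓ, h]
      have hc2 : Λ.src (Λ.comp l (M.φl x q')) = M.r (M.φx x q') := by
        rw [Λ.src_comp l (M.φl x q') (by rw [M.rng_φl x q' hcc]; exact hc)]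
        exact M.src_φl x q' hcc
      rw [nfB L hc hcc, epNF L L' hc2, epNF L L' hc, epΓ, ← nfB L' hc hcc]
    · -- NF NF : impossible
      exfalso
      have hd := L.S.d_comp _ _ h
      have h2 := last_le_one L (L.S.comp (L.S.comp (L.ipΛ l) (L.ψ x).1)
        (L.S.comp (L.ipΛ l') (L.ψ x').1))
      rw [hd] at h2
      have e1 : L.S.d (L.S.comp (L.ipΛ l) (L.ψ x).1) (Fin.last k) = 1 := by
        rw [nf_d L hc]; simp
      have e2 : L.S.d (L.S.comp (L.ipΛ l') (L.ψ x').1) (Fin.last k) = 1 := by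
        rw [nf_d L hc']; simp
      simp only [Pi.add_apply] at h2
      omega

end Uniq3
end
end LinkAux

/-- every `(Λ,Γ)` k-morph has a linking graph, and the linking
graph is unique up to an isomorphism of `(k+1)`-graphs compatible with the
inclusions of `Λ` and `Γ`. -/
theorem linking_exists_unique {k : ℕ} {OΛ PΛ OΓ PΓ X : Type}
    (Λ : KGraphStr k OΛ PΛ) (Γ : KGraphStr k OΓ PΓ)
    (M : KMorph Λ Γ X) :
    Nonempty (Linking Λ Γ M) ∧
    ∀ L₁ L₂ : Linking Λ Γ M,
      ∃ H : GraphIso L₁.S L₂.S,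
        (∀ v, H.ev (L₁.ivΛ v) = L₂.ivΛ v) ∧
        (∀ w, H.ev (L₁.ivΓ w) = L₂.ivΓ w) ∧
        (∀ p, H.ep (L₁.ipΛ p) = L₂.ipΛ p) ∧
        (∀ q, H.ep (L₁.ipΓ q) = L₂.ipΓ q) := by
  constructor
  · exact ⟨LinkAux.linkOf Λ Γ M⟩
  · intro L₁ L₂
    exact ⟨LinkAux.linkIso L₁ L₂, fun v => LinkAux.evΛ L₁ L₂ v,
      fun w => LinkAux.evΓ L₁ L₂ w,
      fun p => LinkAux.epΛ L₁ L₂ p, fun q => LinkAux.epΓ L₁ L₂ q⟩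
end

section
/- Let Γ be an l-graph and X a Γ-system of k-morphs. If Σ and Ψ are both Γ-bundles for X with bundle maps f and g respectively, then there is a (k+l)-graph isomorphism H : Σ → Ψ intertwining the bundle maps: g ∘ H = f. -/
section Systems

variable {l k : ℕ} {VΓ PΓ : Type}

/-- Transport a k-morph along an equality of vertices (first graph). -/
def leftCast {ObjF PathF : VΓ → Type} (gr : ∀ v, KGraphStr k (ObjF v) (PathF v))
    {v w : VΓ} (h : v = w) {OΓ' PΓ' X : Type} {Γ' : KGraphStr k OΓ' PΓ'}
    (M : KMorph (gr v) Γ' X) : KMorph (gr w) Γ' X := h ▸ M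

/-- Transport a k-morph along an equality of vertices (second graph). -/
def rightCast {ObjF PathF : VΓ → Type} (gr : ∀ v, KGraphStr k (ObjF v) (PathF v))
    {v w : VΓ} (h : v = w) {OΛ' PΛ' X : Type} {Λ' : KGraphStr k OΛ' PΛ'}
    (M : KMorph Λ' (gr v) X) : KMorph Λ' (gr w) X := h ▸ M

/-- Transport a k-morph along equalities of vertices on both sides. -/
def castMor {ObjF PathF : VΓ → Type} (gr : ∀ v, KGraphStr k (ObjF v) (PathF v))
    {v v' w w' : VΓ} (hv : v = v') (hw : w = w') {X : Type}
    (M : KMorph (gr v) (gr w) X) : KMorph (gr v') (gr w') X :=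
  leftCast gr hv (rightCast gr hw M)

/-- Transport a k-morph along an equality of carriers. -/
def carrierCast {k : ℕ} {OΛ PΛ OΓ PΓ : Type} {Λ : KGraphStr k OΛ PΛ}
    {Γ : KGraphStr k OΓ PΓ} {X Y : Type} (h : X = Y) (M : KMorph Λ Γ X) :
    KMorph Λ Γ Y := h ▸ M

/-- A `Γ`-system of k-morphs over an `l`-graph `G`: k-graphs `Λ_v = gr v` at
each vertex, a `(Λ_{r(γ)}, Λ_{s(γ)})` k-morph `X γ` at each path, fibred
products `prod`, and k-morph isomorphisms `θ_{α,β} = th h` from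
`X_α *_{Λ_{s(α)}⁰} X_β` to `X_{αβ}`, such that `X_v = I_{Λ_v}` at vertices,
`θ_{r(β),β}`, `θ_{α,s(α)}` are the canonical isomorphisms, and the
associativity coherence holds. -/
structure GammaSystem (G : KGraphStr l VΓ PΓ) (ObjF PathF : VΓ → Type)
    (gr : ∀ v, KGraphStr k (ObjF v) (PathF v)) where
  X : PΓ → Type
  mor : ∀ γ, KMorph (gr (G.rng γ)) (gr (G.src γ)) (X γ)
  prod : ∀ ⦃α β : PΓ⦄ (h : G.src α = G.rng β),
    KMorph (gr (G.rng α)) (gr (G.src β))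
      (FibCarrier (mor α) (leftCast gr h.symm (mor β)))
  prod_spec : ∀ ⦃α β : PΓ⦄ (h : G.src α = G.rng β),
    IsFibProd (mor α) (leftCast gr h.symm (mor β)) (prod h)
  th : ∀ ⦃α β : PΓ⦄ (h : G.src α = G.rng β),
    MorphIso (prod h)
      (castMor gr (G.rng_comp α β h) (G.src_comp α β h) (mor (G.comp α β)))
  unit_type : ∀ v, X (G.ident v) = ObjF v
  unit_id : ∀ v, IsIdMorph (carrierCast (unit_type v)
    (castMor gr (G.rng_ident v) (G.src_ident v) (mor (G.ident v))))
  th_unit_left : ∀ (β : PΓ) (h : G.src (G.ident (G.rng β)) = G.rng β) p,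
    cast (congrArg X (G.ident_comp β)) ((th h).θ p) = p.1.2
  th_unit_right : ∀ (α : PΓ) (h : G.src α = G.rng (G.ident (G.src α))) p,
    cast (congrArg X (G.comp_ident α)) ((th h).θ p) = p.1.1
  th_assoc : ∀ (α β γ : PΓ) (h₁ : G.src α = G.rng β) (h₂ : G.src β = G.rng γ)
    (h₃ : G.src (G.comp α β) = G.rng γ) (h₄ : G.src α = G.rng (G.comp β γ))
    (x₁ : X α) (x₂ : X β) (x₃ : X γ)
    (hx₁₂ : (mor α).s x₁ = (leftCast gr h₁.symm (mor β)).r x₂)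
    (hL : (mor (G.comp α β)).s ((th h₁).θ ⟨(x₁, x₂), hx₁₂⟩)
            = (leftCast gr h₃.symm (mor γ)).r x₃)
    (hx₂₃ : (mor β).s x₂ = (leftCast gr h₂.symm (mor γ)).r x₃)
    (hR : (mor α).s x₁
            = (leftCast gr h₄.symm (mor (G.comp β γ))).r
                ((th h₂).θ ⟨(x₂, x₃), hx₂₃⟩)),
    cast (congrArg X (G.comp_assoc α β γ h₁ h₂))
        ((th h₃).θ ⟨((th h₁).θ ⟨(x₁, x₂), hx₁₂⟩, x₃), hL⟩)
      = (th h₄).θ ⟨(x₁, (th h₂).θ ⟨(x₂, x₃), hx₂₃⟩), hR⟩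

end Systems

/-- A `Γ`-bundle for a `Γ`-system `sys` over the `l`-graph `G`: a
`(k+l)`-graph `S` with a `π`-quasimorphism `(fv, fp)` onto `G`, surjective on
vertices, such that the induced `Γ`-system `X(f)` is isomorphic to `sys`.
The isomorphism is encoded by the embeddings `hv`, `hp` (of the k-graph
`Λ_v` onto the fibre over `v`) and `hm` (of the morph set `X γ` onto the set
of paths of degree `(0,d(γ))` over `γ`), intertwining all structure maps. -/
structure GammaBundle {l k : ℕ} {VΓ PΓ : Type} {G : KGraphStr l VΓ PΓ}
    {ObjF PathF : VΓ → Type} {gr : ∀ v, KGraphStr k (ObjF v) (PathF v)}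
    (sys : GammaSystem G ObjF PathF gr) where
  Ob : Type
  Pa : Type
  S : KGraphStr (k+l) Ob Pa
  fv : Ob → VΓ
  fp : Pa → PΓ
  -- `f` is a π-quasimorphism, surjective on vertices
  fsrc : ∀ p, fv (S.src p) = G.src (fp p)
  frng : ∀ p, fv (S.rng p) = G.rng (fp p)
  fident : ∀ o, fp (S.ident o) = G.ident (fv o)
  fcomp : ∀ p q, S.src p = S.rng q → fp (S.comp p q) = G.comp (fp p) (fp q)
  fd : ∀ p (i : Fin l), S.d p (Fin.natAdd k i) = G.d (fp p) i
  fsurj : Function.Surjective fv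
  -- the isomorphism of `Γ`-systems `X(f) ≅ sys`:
  hv : ∀ v : VΓ, ObjF v → Ob
  hp : ∀ v : VΓ, PathF v → Pa
  hm : ∀ γ : PΓ, sys.X γ → Pa
  hv_f : ∀ v u, fv (hv v u) = v
  hv_inj : ∀ v, Function.Injective (hv v)
  hv_surj : ∀ v o, fv o = v → ∃ u, hv v u = o
  hp_f : ∀ v p, fp (hp v p) = G.ident v
  hp_d : ∀ v p, S.d (hp v p) = Fin.append ((gr v).d p) 0
  hp_src : ∀ v p, S.src (hp v p) = hv v ((gr v).src p)
  hp_rng : ∀ v p, S.rng (hp v p) = hv v ((gr v).rng p)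
  hp_ident : ∀ v u, S.ident (hv v u) = hp v ((gr v).ident u)
  hp_comp : ∀ v p q, (gr v).src p = (gr v).rng q →
    S.comp (hp v p) (hp v q) = hp v ((gr v).comp p q)
  hp_inj : ∀ v, Function.Injective (hp v)
  hp_surj : ∀ v (q : Pa), fp q = G.ident v → ∃ p, hp v p = q
  hm_f : ∀ γ x, fp (hm γ x) = γ
  hm_d : ∀ γ x, S.d (hm γ x) = Fin.append (0 : Fin k → ℕ) (G.d γ)
  hm_rng : ∀ γ x, S.rng (hm γ x) = hv (G.rng γ) ((sys.mor γ).r x)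
  hm_src : ∀ γ x, S.src (hm γ x) = hv (G.src γ) ((sys.mor γ).s x)
  hm_inj : ∀ γ, Function.Injective (hm γ)
  hm_surj : ∀ γ (q : Pa), fp q = γ →
    S.d q = Fin.append (0 : Fin k → ℕ) (G.d γ) → ∃ x, hm γ x = q
  hm_φ : ∀ γ x lam, (sys.mor γ).s x = (gr (G.src γ)).rng lam →
    S.comp (hm γ x) (hp (G.src γ) lam)
      = S.comp (hp (G.rng γ) ((sys.mor γ).φl x lam))
          (hm γ ((sys.mor γ).φx x lam))
  hm_θ : ∀ ⦃α β : PΓ⦄ (h : G.src α = G.rng β) (x₁ : sys.X α) (x₂ : sys.X β)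
    (hx : (sys.mor α).s x₁ = (leftCast gr h.symm (sys.mor β)).r x₂),
    S.comp (hm α x₁) (hm β x₂) = hm (G.comp α β) ((sys.th h).θ ⟨(x₁, x₂), hx⟩)
section BundleUnique

/-- degree-zero paths in a k-graph are identities -/
theorem dZeroIdent {k : ℕ} {O P : Type} (S : KGraphStr k O P) (p : P)
    (h : S.d p = 0) : p = S.ident (S.src p) := by
  obtain ⟨u, -, huniq⟩ := S.factor p 0 0 (by rw [h]; simp)
  have h₁ : ((S.ident (S.rng p), p) : P × P) = u :=
    huniq _ ⟨by rw [S.src_ident], S.d_ident _, h, S.ident_comp p⟩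
  have h₂ : ((p, S.ident (S.src p)) : P × P) = u :=
    huniq _ ⟨(S.rng_ident _).symm, h, S.d_ident _, S.comp_ident p⟩
  exact congrArg Prod.snd (h₁.trans h₂.symm)

variable {l k : ℕ} {VΓ PΓ : Type} {G : KGraphStr l VΓ PΓ}
  {ObjF PathF : VΓ → Type} {gr : ∀ v, KGraphStr k (ObjF v) (PathF v)}

/-- transport of objects along vertex equalities -/
def oTr {v w : VΓ} (h : v = w) (u : ObjF v) : ObjF w := h ▸ u

/-- transport of paths along vertex equalities -/
def pTr {v w : VΓ} (h : v = w) (p : PathF v) : PathF w := h ▸ p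

theorem oTr_eq_symm {v w : VΓ} (h : v = w) (x : ObjF v) (y : ObjF w) :
    oTr (ObjF := ObjF) h x = y ↔ x = oTr h.symm y := by subst h; exact Iff.rfl

theorem sigma_snd {a a' : VΓ} {b : ObjF a} {b' : ObjF a'}
    (hE : (⟨a, b⟩ : Σ v, ObjF v) = ⟨a', b'⟩) (h : a = a') :
    oTr (ObjF := ObjF) h b = b' := by
  subst h
  injection hE with h1 h2

theorem gr_src_pTr {v w : VΓ} (h : v = w) (p : PathF v) :
    (gr w).src (pTr h p) = oTr h ((gr v).src p) := by subst h; rfl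

theorem gr_rng_pTr {v w : VΓ} (h : v = w) (p : PathF v) :
    (gr w).rng (pTr h p) = oTr h ((gr v).rng p) := by subst h; rfl

theorem leftCast_r {v w : VΓ} (h : v = w) {O' P' X : Type} {Γ' : KGraphStr k O' P'}
    (M : KMorph (gr v) Γ' X) (x : X) :
    (leftCast gr h M).r x = oTr h (M.r x) := by subst h; rfl

theorem castMor_r {v v' w w' : VΓ} (hv : v = v') (hw : w = w') {X : Type}
    (M : KMorph (gr v) (gr w) X) (x : X) :
    (castMor gr hv hw M).r x = oTr hv (M.r x) := by subst hv; subst hw; rfl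

theorem castMor_s {v v' w w' : VΓ} (hv : v = v') (hw : w = w') {X : Type}
    (M : KMorph (gr v) (gr w) X) (x : X) :
    (castMor gr hv hw M).s x = oTr hw (M.s x) := by subst hv; subst hw; rfl

theorem carrierCast_r {k : ℕ} {OΛ PΛ OΓ' PΓ' : Type} {Λ : KGraphStr k OΛ PΛ}
    {Γ' : KGraphStr k OΓ' PΓ'} {X Y : Type} (h : X = Y) (M : KMorph Λ Γ' X) (y : Y) :
    (carrierCast h M).r y = M.r (cast h.symm y) := by subst h; rfl

theorem carrierCast_s {k : ℕ} {OΛ PΛ OΓ' PΓ' : Type} {Λ : KGraphStr k OΛ PΛ}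
    {Γ' : KGraphStr k OΓ' PΓ'} {X Y : Type} (h : X = Y) (M : KMorph Λ Γ' X) (y : Y) :
    (carrierCast h M).s y = M.s (cast h.symm y) := by subst h; rfl

/-- Normal forms for paths of a Γ-bundle. -/
structure NF (sys : GammaSystem G ObjF PathF gr) where
  γ : PΓ
  lam : PathF (G.rng γ)
  x : sys.X γ
  compat : (gr (G.rng γ)).src lam = (sys.mor γ).r x

variable {sys : GammaSystem G ObjF PathF gr}

theorem hp_pTr (B : GammaBundle sys) {v w : VΓ} (h : v = w) (p : PathF v) :
    B.hp w (pTr h p) = B.hp v p := by subst h; rfl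

theorem hv_oTr (B : GammaBundle sys) {v w : VΓ} (h : v = w) (u : ObjF v) :
    B.hv w (oTr h u) = B.hv v u := by subst h; rfl

def nfToPa (B : GammaBundle sys) (n : NF sys) : B.Pa :=
  B.S.comp (B.hp (G.rng n.γ) n.lam) (B.hm n.γ n.x)

def obToOb (B : GammaBundle sys) (z : Σ v, ObjF v) : B.Ob := B.hv z.1 z.2

theorem nf_ok (B : GammaBundle sys) (n : NF sys) :
    B.S.src (B.hp (G.rng n.γ) n.lam) = B.S.rng (B.hm n.γ n.x) := by
  rw [B.hp_src, B.hm_rng, n.compat]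

theorem src_nf (B : GammaBundle sys) (n : NF sys) :
    B.S.src (nfToPa B n) = obToOb B ⟨G.src n.γ, (sys.mor n.γ).s n.x⟩ := by
  rw [nfToPa, B.S.src_comp _ _ (nf_ok B n), B.hm_src]; rfl

theorem rng_nf (B : GammaBundle sys) (n : NF sys) :
    B.S.rng (nfToPa B n) = obToOb B ⟨G.rng n.γ, (gr (G.rng n.γ)).rng n.lam⟩ := by
  rw [nfToPa, B.S.rng_comp _ _ (nf_ok B n), B.hp_rng]; rfl

theorem d_nf (B : GammaBundle sys) (n : NF sys) :
    B.S.d (nfToPa B n) = Fin.append ((gr (G.rng n.γ)).d n.lam) (G.d n.γ) := by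
  rw [nfToPa, B.S.d_comp _ _ (nf_ok B n), B.hp_d, B.hm_d]
  funext i
  refine Fin.addCases (fun j => ?_) (fun j => ?_) i <;>
    simp [Fin.append_left, Fin.append_right]

theorem fp_nf (B : GammaBundle sys) (n : NF sys) :
    B.fp (nfToPa B n) = n.γ := by
  rw [nfToPa, B.fcomp _ _ (nf_ok B n), B.hp_f, B.hm_f]
  exact G.ident_comp n.γ

theorem nfToPa_surj (B : GammaBundle sys) : Function.Surjective (nfToPa B) := by
  intro q
  have hdq : B.S.d q = Fin.append (fun i => B.S.d q (Fin.castAdd l i)) (0 : Fin l → ℕ)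
      + Fin.append (0 : Fin k → ℕ) (G.d (B.fp q)) := by
    funext i
    refine Fin.addCases (fun j => ?_) (fun j => ?_) i
    · simp [Fin.append_left, Fin.append_right]
    · simp [Fin.append_left, Fin.append_right, B.fd q j]
  obtain ⟨⟨μ, ν⟩, ⟨hc, hdμ, hdν, hq⟩, -⟩ := B.S.factor q _ _ hdq
  have hfpμ : G.d (B.fp μ) = 0 := by
    funext i
    rw [← B.fd μ i, hdμ]
    simp [Fin.append_right]
  have hμid : B.fp μ = G.ident (G.src (B.fp μ)) := dZeroIdent G _ hfpμ
  have hse : G.src (B.fp μ) = G.rng (B.fp ν) := by rw [← B.fsrc, ← B.frng, hc]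
  have hfpq : B.fp q = B.fp ν := by
    rw [← hq, B.fcomp _ _ hc, hμid, hse, G.ident_comp]
  obtain ⟨x, hx⟩ := B.hm_surj (B.fp q) ν hfpq.symm hdν
  obtain ⟨p0, hp0⟩ := B.hp_surj (G.src (B.fp μ)) μ hμid
  have hw : G.src (B.fp μ) = G.rng (B.fp q) := by rw [hse, hfpq]
  have hμ' : B.hp (G.rng (B.fp q)) (pTr hw p0) = μ := by rw [hp_pTr]; exact hp0
  refine ⟨⟨B.fp q, pTr hw p0, x, ?_⟩, ?_⟩
  · apply B.hv_inj (G.rng (B.fp q))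
    have h1 : B.S.src (B.hp (G.rng (B.fp q)) (pTr hw p0)) = B.S.rng (B.hm (B.fp q) x) := by
      rw [hμ', hx]; exact hc
    rwa [B.hp_src, B.hm_rng] at h1
  · show B.S.comp (B.hp (G.rng (B.fp q)) (pTr hw p0)) (B.hm (B.fp q) x) = q
    rw [hμ', hx, hq]

theorem nfToPa_inj (B : GammaBundle sys) : Function.Injective (nfToPa B) := by
  rintro ⟨γ₁, lam₁, x₁, c₁⟩ ⟨γ₂, lam₂, x₂, c₂⟩ hEq
  have hγ : γ₁ = γ₂ := by
    have h1 := fp_nf B ⟨γ₁, lam₁, x₁, c₁⟩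
    rw [hEq, fp_nf] at h1
    exact h1.symm
  subst hγ
  have hd : Fin.append ((gr (G.rng γ₁)).d lam₁) (G.d γ₁)
      = Fin.append ((gr (G.rng γ₁)).d lam₂) (G.d γ₁) := by
    rw [← d_nf B ⟨γ₁, lam₁, x₁, c₁⟩, ← d_nf B ⟨γ₁, lam₂, x₂, c₂⟩, hEq]
  have hdl : (gr (G.rng γ₁)).d lam₁ = (gr (G.rng γ₁)).d lam₂ := by
    funext i
    have h2 := congrFun hd (Fin.castAdd l i)
    simpa [Fin.append_left] using h2
  obtain ⟨u, -, huniq⟩ := B.S.factor (nfToPa B ⟨γ₁, lam₁, x₁, c₁⟩)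
      (Fin.append ((gr (G.rng γ₁)).d lam₁) 0) (Fin.append (0 : Fin k → ℕ) (G.d γ₁))
      (by
        rw [d_nf]
        funext i
        refine Fin.addCases (fun j => ?_) (fun j => ?_) i <;>
          simp [Fin.append_left, Fin.append_right])
  have h₁ : ((B.hp (G.rng γ₁) lam₁, B.hm γ₁ x₁) : B.Pa × B.Pa) = u :=
    huniq _ ⟨nf_ok B ⟨γ₁, lam₁, x₁, c₁⟩, B.hp_d _ _, B.hm_d _ _, rfl⟩
  have h₂ : ((B.hp (G.rng γ₁) lam₂, B.hm γ₁ x₂) : B.Pa × B.Pa) = u :=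
    huniq _ ⟨nf_ok B ⟨γ₁, lam₂, x₂, c₂⟩, by rw [B.hp_d, hdl], B.hm_d _ _, hEq.symm⟩
  have h3 := h₁.trans h₂.symm
  have hl := B.hp_inj _ (congrArg Prod.fst h3)
  have hx := B.hm_inj _ (congrArg Prod.snd h3)
  subst hl; subst hx; rfl

noncomputable def nfEquiv (B : GammaBundle sys) : NF sys ≃ B.Pa :=
  Equiv.ofBijective (nfToPa B) ⟨nfToPa_inj B, nfToPa_surj B⟩

theorem obToOb_inj (B : GammaBundle sys) : Function.Injective (obToOb B) := by
  rintro ⟨v, u⟩ ⟨v', u'⟩ hEq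
  have hv' : v = v' := by rw [← B.hv_f v u, ← B.hv_f v' u']; exact congrArg B.fv hEq
  subst hv'
  have h2 := B.hv_inj v hEq
  exact congrArg (Sigma.mk v) h2

theorem obToOb_surj (B : GammaBundle sys) : Function.Surjective (obToOb B) := by
  intro o
  obtain ⟨u, hu⟩ := B.hv_surj (B.fv o) o rfl
  exact ⟨⟨B.fv o, u⟩, hu⟩

noncomputable def obEquiv (B : GammaBundle sys) : (Σ v, ObjF v) ≃ B.Ob :=
  Equiv.ofBijective (obToOb B) ⟨obToOb_inj B, obToOb_surj B⟩

theorem nfEquiv_symm_apply (B : GammaBundle sys) (n : NF sys) :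
    (nfEquiv B).symm (nfToPa B n) = n := (nfEquiv B).symm_apply_apply n

theorem obEquiv_symm_apply (B : GammaBundle sys) (z : Σ v, ObjF v) :
    (obEquiv B).symm (obToOb B z) = z := (obEquiv B).symm_apply_apply z
def identNF (v : VΓ) (u : ObjF v) : NF sys where
  γ := G.ident v
  lam := pTr (G.rng_ident v).symm ((gr v).ident u)
  x := cast (sys.unit_type v).symm u
  compat := by
    rw [gr_src_pTr, (gr v).src_ident]
    have h1 := (sys.unit_id v).1 u
    rw [carrierCast_r, castMor_r] at h1
    exact ((oTr_eq_symm _ _ _).mp h1).symm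

theorem ident_nf (B : GammaBundle sys) (v : VΓ) (u : ObjF v) :
    nfToPa B (identNF (sys := sys) v u) = B.S.ident (B.hv v u) := by
  have hx0 : (sys.mor (G.ident v)).s (cast (sys.unit_type v).symm u)
      = oTr (G.src_ident v).symm u := by
    have h1 := (sys.unit_id v).2.1 u
    rw [carrierCast_s, castMor_s] at h1
    exact (oTr_eq_symm _ _ _).mp h1
  have hident : B.hm (G.ident v) (cast (sys.unit_type v).symm u)
      = B.S.ident (B.hv v u) := by
    have hd0 : B.S.d (B.hm (G.ident v) (cast (sys.unit_type v).symm u)) = 0 := by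
      rw [B.hm_d]
      funext i
      refine Fin.addCases (fun j => ?_) (fun j => ?_) i
      · simp [Fin.append_left]
      · simp [Fin.append_right, G.d_ident]
    rw [dZeroIdent B.S _ hd0, B.hm_src, hx0, hv_oTr B (G.src_ident v).symm]
  show B.S.comp (B.hp (G.rng (G.ident v)) (pTr (G.rng_ident v).symm ((gr v).ident u)))
      (B.hm (G.ident v) (cast (sys.unit_type v).symm u)) = _
  rw [hp_pTr, ← B.hp_ident, hident]
  have h2 := B.S.comp_ident (B.S.ident (B.hv v u))
  rwa [B.S.src_ident] at h2

def lam2 (n₁ n₂ : NF sys) (h : G.src n₁.γ = G.rng n₂.γ) : PathF (G.src n₁.γ) :=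
  pTr h.symm n₂.lam

theorem hrng_lemma (n₁ n₂ : NF sys) (h : G.src n₁.γ = G.rng n₂.γ)
    (hs : oTr (ObjF := ObjF) h ((sys.mor n₁.γ).s n₁.x) = (gr (G.rng n₂.γ)).rng n₂.lam) :
    (sys.mor n₁.γ).s n₁.x = (gr (G.src n₁.γ)).rng (lam2 n₁ n₂ h) := by
  simp only [lam2]
  rw [gr_rng_pTr]
  exact (oTr_eq_symm h _ _).mp hs

theorem hconn_lemma (n₁ n₂ : NF sys) (h : G.src n₁.γ = G.rng n₂.γ)
    (hs : oTr (ObjF := ObjF) h ((sys.mor n₁.γ).s n₁.x) = (gr (G.rng n₂.γ)).rng n₂.lam) :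
    (sys.mor n₁.γ).s ((sys.mor n₁.γ).φx n₁.x (lam2 n₁ n₂ h))
      = (leftCast gr h.symm (sys.mor n₂.γ)).r n₂.x := by
  rw [(sys.mor n₁.γ).s_φx _ _ (hrng_lemma n₁ n₂ h hs), leftCast_r, ← n₂.compat]
  simp only [lam2]
  exact gr_src_pTr h.symm n₂.lam

def compNF (n₁ n₂ : NF sys) (h : G.src n₁.γ = G.rng n₂.γ)
    (hs : oTr (ObjF := ObjF) h ((sys.mor n₁.γ).s n₁.x) = (gr (G.rng n₂.γ)).rng n₂.lam) :
    NF sys where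
  γ := G.comp n₁.γ n₂.γ
  lam := pTr (G.rng_comp n₁.γ n₂.γ h).symm
    ((gr (G.rng n₁.γ)).comp n₁.lam ((sys.mor n₁.γ).φl n₁.x (lam2 n₁ n₂ h)))
  x := (sys.th h).θ ⟨((sys.mor n₁.γ).φx n₁.x (lam2 n₁ n₂ h), n₂.x), hconn_lemma n₁ n₂ h hs⟩
  compat := by
    rw [gr_src_pTr]
    have h1 : (gr (G.rng n₁.γ)).src
          ((gr (G.rng n₁.γ)).comp n₁.lam ((sys.mor n₁.γ).φl n₁.x (lam2 n₁ n₂ h)))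
        = (sys.mor n₁.γ).r ((sys.mor n₁.γ).φx n₁.x (lam2 n₁ n₂ h)) := by
      rw [(gr (G.rng n₁.γ)).src_comp _ _
            (n₁.compat.trans ((sys.mor n₁.γ).rng_φl _ _ (hrng_lemma n₁ n₂ h hs)).symm),
          (sys.mor n₁.γ).src_φl _ _ (hrng_lemma n₁ n₂ h hs)]
    rw [h1]
    have h2 := (sys.th h).r_θ
      ⟨((sys.mor n₁.γ).φx n₁.x (lam2 n₁ n₂ h), n₂.x), hconn_lemma n₁ n₂ h hs⟩
    rw [castMor_r] at h2
    replace h2 := h2.trans ((sys.prod_spec h).1 _)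
    exact ((oTr_eq_symm _ _ _).mp h2).symm

theorem nf_comp (B : GammaBundle sys) (n₁ n₂ : NF sys) (h : G.src n₁.γ = G.rng n₂.γ)
    (hs : oTr (ObjF := ObjF) h ((sys.mor n₁.γ).s n₁.x) = (gr (G.rng n₂.γ)).rng n₂.lam) :
    B.S.comp (nfToPa B n₁) (nfToPa B n₂) = nfToPa B (compNF n₁ n₂ h hs) := by
  have hrng := hrng_lemma n₁ n₂ h hs
  have hAB : B.S.src (B.hp (G.rng n₁.γ) n₁.lam) = B.S.rng (B.hm n₁.γ n₁.x) := nf_ok B n₁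
  have hC : B.hp (G.src n₁.γ) (lam2 n₁ n₂ h) = B.hp (G.rng n₂.γ) n₂.lam :=
    hp_pTr B h.symm n₂.lam
  have hBC : B.S.src (B.hm n₁.γ n₁.x) = B.S.rng (B.hp (G.src n₁.γ) (lam2 n₁ n₂ h)) := by
    rw [B.hm_src, B.hp_rng, hrng]
  have hCE : B.S.src (B.hp (G.src n₁.γ) (lam2 n₁ n₂ h)) = B.S.rng (B.hm n₂.γ n₂.x) := by
    rw [hC]; exact nf_ok B n₂
  have hFG : B.S.src (B.hp (G.rng n₁.γ) ((sys.mor n₁.γ).φl n₁.x (lam2 n₁ n₂ h)))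
      = B.S.rng (B.hm n₁.γ ((sys.mor n₁.γ).φx n₁.x (lam2 n₁ n₂ h))) := by
    rw [B.hp_src, B.hm_rng, (sys.mor n₁.γ).src_φl _ _ hrng]
  have hGE : B.S.src (B.hm n₁.γ ((sys.mor n₁.γ).φx n₁.x (lam2 n₁ n₂ h)))
      = B.S.rng (B.hm n₂.γ n₂.x) := by
    rw [B.hm_src, B.hm_rng, (sys.mor n₁.γ).s_φx _ _ hrng, ← n₂.compat]
    show B.hv (G.src n₁.γ) ((gr (G.src n₁.γ)).src (lam2 n₁ n₂ h)) = _
    simp only [lam2]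
    rw [gr_src_pTr, hv_oTr]
  have hAF : B.S.src (B.hp (G.rng n₁.γ) n₁.lam)
      = B.S.rng (B.hp (G.rng n₁.γ) ((sys.mor n₁.γ).φl n₁.x (lam2 n₁ n₂ h))) := by
    rw [B.hp_src, B.hp_rng, n₁.compat, (sys.mor n₁.γ).rng_φl _ _ hrng]
  calc B.S.comp (B.S.comp (B.hp (G.rng n₁.γ) n₁.lam) (B.hm n₁.γ n₁.x))
        (B.S.comp (B.hp (G.rng n₂.γ) n₂.lam) (B.hm n₂.γ n₂.x))
      = B.S.comp (B.S.comp (B.hp (G.rng n₁.γ) n₁.lam) (B.hm n₁.γ n₁.x))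
        (B.S.comp (B.hp (G.src n₁.γ) (lam2 n₁ n₂ h)) (B.hm n₂.γ n₂.x)) := by rw [hC]
    _ = B.S.comp (B.hp (G.rng n₁.γ) n₁.lam) (B.S.comp (B.hm n₁.γ n₁.x)
          (B.S.comp (B.hp (G.src n₁.γ) (lam2 n₁ n₂ h)) (B.hm n₂.γ n₂.x))) :=
        B.S.comp_assoc _ _ _ hAB (by rw [B.S.rng_comp _ _ hCE]; exact hBC)
    _ = B.S.comp (B.hp (G.rng n₁.γ) n₁.lam) (B.S.comp (B.S.comp (B.hm n₁.γ n₁.x)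
          (B.hp (G.src n₁.γ) (lam2 n₁ n₂ h))) (B.hm n₂.γ n₂.x)) := by
        rw [B.S.comp_assoc _ _ _ hBC hCE]
    _ = B.S.comp (B.hp (G.rng n₁.γ) n₁.lam) (B.S.comp (B.S.comp
          (B.hp (G.rng n₁.γ) ((sys.mor n₁.γ).φl n₁.x (lam2 n₁ n₂ h)))
          (B.hm n₁.γ ((sys.mor n₁.γ).φx n₁.x (lam2 n₁ n₂ h)))) (B.hm n₂.γ n₂.x)) := by
        rw [B.hm_φ n₁.γ n₁.x (lam2 n₁ n₂ h) hrng]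
    _ = B.S.comp (B.hp (G.rng n₁.γ) n₁.lam) (B.S.comp
          (B.hp (G.rng n₁.γ) ((sys.mor n₁.γ).φl n₁.x (lam2 n₁ n₂ h)))
          (B.S.comp (B.hm n₁.γ ((sys.mor n₁.γ).φx n₁.x (lam2 n₁ n₂ h)))
            (B.hm n₂.γ n₂.x))) := by
        rw [B.S.comp_assoc _ _ _ hFG hGE]
    _ = B.S.comp (B.S.comp (B.hp (G.rng n₁.γ) n₁.lam)
          (B.hp (G.rng n₁.γ) ((sys.mor n₁.γ).φl n₁.x (lam2 n₁ n₂ h))))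
          (B.S.comp (B.hm n₁.γ ((sys.mor n₁.γ).φx n₁.x (lam2 n₁ n₂ h)))
            (B.hm n₂.γ n₂.x)) :=
        (B.S.comp_assoc _ _ _ hAF (by rw [B.S.rng_comp _ _ hGE]; exact hFG)).symm
    _ = B.S.comp (B.hp (G.rng n₁.γ)
          ((gr (G.rng n₁.γ)).comp n₁.lam ((sys.mor n₁.γ).φl n₁.x (lam2 n₁ n₂ h))))
          (B.hm (G.comp n₁.γ n₂.γ) ((sys.th h).θ
            ⟨((sys.mor n₁.γ).φx n₁.x (lam2 n₁ n₂ h), n₂.x), hconn_lemma n₁ n₂ h hs⟩)) := by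
        rw [B.hp_comp _ _ _ (n₁.compat.trans ((sys.mor n₁.γ).rng_φl _ _ hrng).symm),
            B.hm_θ h _ _ (hconn_lemma n₁ n₂ h hs)]
    _ = nfToPa B (compNF n₁ n₂ h hs) := by
        simp only [nfToPa, compNF]
        rw [hp_pTr]
end BundleUnique

/-- any two `Γ`-bundles for the same `Γ`-system of k-morphs are
isomorphic as `(k+l)`-graphs, via an isomorphism intertwining the bundle
maps. -/
theorem gammaBundle_unique {l k : ℕ} {VΓ PΓ : Type} {G : KGraphStr l VΓ PΓ}
    {ObjF PathF : VΓ → Type} {gr : ∀ v, KGraphStr k (ObjF v) (PathF v)}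
    (sys : GammaSystem G ObjF PathF gr)
    (B₁ B₂ : GammaBundle sys) :
    ∃ H : GraphIso B₁.S B₂.S,
      (∀ o, B₂.fv (H.ev o) = B₁.fv o) ∧
      (∀ p, B₂.fp (H.ep p) = B₁.fp p) := by
  refine ⟨{ ev := (obEquiv B₁).symm.trans (obEquiv B₂)
            ep := (nfEquiv B₁).symm.trans (nfEquiv B₂)
            src_ep := ?_
            rng_ep := ?_
            d_ep := ?_
            ident_ep := ?_
            comp_ep := ?_ }, ?_, ?_⟩
  · -- src_ep
    intro p
    have hp1 : nfToPa B₁ ((nfEquiv B₁).symm p) = p := (nfEquiv B₁).apply_symm_apply p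
    show B₂.S.src (nfToPa B₂ ((nfEquiv B₁).symm p))
        = obToOb B₂ ((obEquiv B₁).symm (B₁.S.src p))
    rw [src_nf B₂]
    conv_rhs => rw [← hp1, src_nf B₁, obEquiv_symm_apply B₁]
  · -- rng_ep
    intro p
    have hp1 : nfToPa B₁ ((nfEquiv B₁).symm p) = p := (nfEquiv B₁).apply_symm_apply p
    show B₂.S.rng (nfToPa B₂ ((nfEquiv B₁).symm p))
        = obToOb B₂ ((obEquiv B₁).symm (B₁.S.rng p))
    rw [rng_nf B₂]
    conv_rhs => rw [← hp1, rng_nf B₁, obEquiv_symm_apply B₁]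
  · -- d_ep
    intro p
    have hp1 : nfToPa B₁ ((nfEquiv B₁).symm p) = p := (nfEquiv B₁).apply_symm_apply p
    show B₂.S.d (nfToPa B₂ ((nfEquiv B₁).symm p)) = B₁.S.d p
    rw [d_nf B₂]
    conv_rhs => rw [← hp1, d_nf B₁]
  · -- ident_ep
    intro o
    have ho : obToOb B₁ ((obEquiv B₁).symm o) = o := (obEquiv B₁).apply_symm_apply o
    show nfToPa B₂ ((nfEquiv B₁).symm (B₁.S.ident o))
        = B₂.S.ident (obToOb B₂ ((obEquiv B₁).symm o))
    have h1 : B₁.S.ident o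
        = nfToPa B₁ (identNF ((obEquiv B₁).symm o).1 ((obEquiv B₁).symm o).2) := by
      conv_lhs => rw [← ho]
      exact (ident_nf B₁ _ _).symm
    rw [h1, nfEquiv_symm_apply B₁]
    exact ident_nf B₂ _ _
  · -- comp_ep
    intro p q hpq
    have hp1 : nfToPa B₁ ((nfEquiv B₁).symm p) = p := (nfEquiv B₁).apply_symm_apply p
    have hq1 : nfToPa B₁ ((nfEquiv B₁).symm q) = q := (nfEquiv B₁).apply_symm_apply q
    have hE : (⟨G.src ((nfEquiv B₁).symm p).γ,
          (sys.mor ((nfEquiv B₁).symm p).γ).s ((nfEquiv B₁).symm p).x⟩ : Σ v, ObjF v)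
        = ⟨G.rng ((nfEquiv B₁).symm q).γ,
          (gr (G.rng ((nfEquiv B₁).symm q).γ)).rng ((nfEquiv B₁).symm q).lam⟩ := by
      apply obToOb_inj B₁
      rw [← src_nf B₁, ← rng_nf B₁, hp1, hq1]
      exact hpq
    have h : G.src ((nfEquiv B₁).symm p).γ = G.rng ((nfEquiv B₁).symm q).γ :=
      congrArg Sigma.fst hE
    have hs := sigma_snd hE h
    show nfToPa B₂ ((nfEquiv B₁).symm (B₁.S.comp p q))
        = B₂.S.comp (nfToPa B₂ ((nfEquiv B₁).symm p)) (nfToPa B₂ ((nfEquiv B₁).symm q))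
    have h2 : B₁.S.comp p q = nfToPa B₁ (compNF _ _ h hs) := by
      conv_lhs => rw [← hp1, ← hq1]
      exact nf_comp B₁ _ _ h hs
    rw [h2, nfEquiv_symm_apply B₁]
    exact (nf_comp B₂ _ _ h hs).symm
  · -- fv intertwining
    intro o
    have ho : obToOb B₁ ((obEquiv B₁).symm o) = o := (obEquiv B₁).apply_symm_apply o
    conv_rhs => rw [← ho]
    show B₂.fv (B₂.hv ((obEquiv B₁).symm o).1 ((obEquiv B₁).symm o).2)
        = B₁.fv (B₁.hv ((obEquiv B₁).symm o).1 ((obEquiv B₁).symm o).2)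
    rw [B₂.hv_f, B₁.hv_f]
  · -- fp intertwining
    intro p
    have hp1 : nfToPa B₁ ((nfEquiv B₁).symm p) = p := (nfEquiv B₁).apply_symm_apply p
    show B₂.fp (nfToPa B₂ ((nfEquiv B₁).symm p)) = B₁.fp p
    conv_rhs => rw [← hp1]
    rw [fp_nf B₂, fp_nf B₁]
end
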